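/- For m ≥ 1, γ > -1, ν with γ − mν < −1, and any l_n → ∞, the double sum Σ_{i=1}^n Σ_{j=1}^n (ij)^γ/((ij)^m + cn²)^ν is of exact order (cn²)^{γ/m − ν + 1/m}(1 + log(cn²)) when cn² ≤ n^m, and of order (cn²)^{γ/m − ν + 1/m}(1 + log(n^{2m}/(cn²))) when cn² ≥ n^m, uniformly for c ∈ [l_n/n², n^{2m-2}]. -/

import Mathlib

open Finset

private lemma log_ineq_aux {x : ℝ} (hx : 0 < x) : 1 - x⁻¹ ≤ Real.log x := by
  have h := Real.log_le_sub_one_of_pos (inv_pos.mpr hx)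
  rw [Real.log_inv] at h; linarith

lemma harm_ub (a : ℕ) (ha : 1 ≤ a) : ∀ b : ℕ,
    ∑ i ∈ Icc a b, ((i : ℝ))⁻¹ ≤ 1 + Real.log (max ((b : ℝ) / a) 1) := by
  intro b
  induction b with
  | zero =>
    rw [Finset.Icc_eq_empty (by omega)]
    simp only [Finset.sum_empty]
    have := Real.log_nonneg (le_max_right ((0:ℝ)/a) 1)
    linarith
  | succ b ih =>
    by_cases hab : a ≤ b + 1
    · rw [Finset.sum_Icc_succ_top hab]
      have hmax : max (((b:ℝ)+1) / a) 1 = ((b:ℝ)+1) / a := by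
        apply max_eq_left
        rw [le_div_iff₀ (by positivity)]
        rw [one_mul]
        exact_mod_cast hab
      by_cases hab2 : a ≤ b
      · have hmax2 : max ((b:ℝ) / a) 1 = (b:ℝ) / a := by
          apply max_eq_left
          rw [le_div_iff₀ (by positivity)]
          rw [one_mul]
          exact_mod_cast hab2
        rw [hmax2] at ih
        have hb0 : (0:ℝ) < b := by exact_mod_cast Nat.lt_of_lt_of_le ha hab2
        have hkey : ((b:ℝ)+1)⁻¹ ≤ Real.log (((b:ℝ)+1)/b) := by
          have := log_ineq_aux (x := ((b:ℝ)+1)/b) (by positivity)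
          have hx : (((b:ℝ)+1)/b)⁻¹ = (b:ℝ)/((b:ℝ)+1) := by
            rw [inv_div]
          rw [hx] at this
          have : 1 - (b:ℝ)/((b:ℝ)+1) = ((b:ℝ)+1)⁻¹ := by field_simp; ring
          linarith [log_ineq_aux (x := ((b:ℝ)+1)/b) (by positivity), this]
        have hsplit : Real.log (((b:ℝ)+1)/a) = Real.log ((b:ℝ)/a) + Real.log (((b:ℝ)+1)/b) := by
          rw [← Real.log_mul (by positivity) (by positivity)]
          congr 1; field_simp
        push_cast [hmax, hsplit]
        push_cast at ih
        linarith
      · have : a = b + 1 := by omega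
        rw [Finset.Icc_eq_empty (by omega), Finset.sum_empty]
        have h1 : ((b:ℝ)+1)⁻¹ ≤ 1 := by
          rw [inv_le_one₀ (by positivity)]; linarith [Nat.cast_nonneg (α := ℝ) b]
        have h2 : (0:ℝ) ≤ Real.log (max (((b:ℝ)+1) / a) 1) := Real.log_nonneg (le_max_right _ 1)
        push_cast
        push_cast at h1
        linarith
    · rw [Finset.Icc_eq_empty (by omega)]
      simp only [Finset.sum_empty]
      have := Real.log_nonneg (le_max_right (((b:ℝ)+1)/a) 1)
      push_cast
      linarith

lemma harm_lb (a : ℕ) (ha : 1 ≤ a) : ∀ b : ℕ,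
    Real.log (((b : ℝ) + 1) / a) ≤ ∑ i ∈ Icc a b, ((i : ℝ))⁻¹ := by
  intro b
  induction b with
  | zero =>
    rw [Finset.Icc_eq_empty (by omega)]
    simp only [Finset.sum_empty]
    apply Real.log_nonpos (by positivity)
    rw [div_le_one (by positivity)]
    exact_mod_cast ha
  | succ b ih =>
    by_cases hab : a ≤ b + 1
    · rw [Finset.sum_Icc_succ_top hab]
      have hkey : Real.log (((b:ℝ)+2)/((b:ℝ)+1)) ≤ ((b:ℝ)+1)⁻¹ := by
        have := Real.log_le_sub_one_of_pos (x := ((b:ℝ)+2)/((b:ℝ)+1)) (by positivity)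
        have h2 : ((b:ℝ)+2)/((b:ℝ)+1) - 1 = ((b:ℝ)+1)⁻¹ := by
          field_simp
          ring
        linarith
      have hsplit : Real.log (((b:ℝ)+1+1)/a) = Real.log (((b:ℝ)+1)/a) + Real.log (((b:ℝ)+2)/((b:ℝ)+1)) := by
        rw [← Real.log_mul (by positivity) (by positivity)]
        congr 1; field_simp; ring
      push_cast [hsplit]
      push_cast at ih
      linarith
    · rw [Finset.Icc_eq_empty (by omega)]
      simp only [Finset.sum_empty]
      apply Real.log_nonpos (by positivity)
      rw [div_le_one (by positivity)]
      push_cast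
      have : b + 2 ≤ a := by omega
      exact_mod_cast this

lemma sum_shift (f : ℝ → ℝ) (a s : ℕ) :
    ∑ i ∈ Ico a s, f ((i : ℝ) + 1) = ∑ i ∈ Icc (a+1) s, f i := by
  rw [← Finset.Ico_add_one_right_eq_Icc]
  rw [← Finset.sum_Ico_add' (fun i : ℕ => f i) a s 1]
  push_cast
  rfl

lemma anti_rpow {q : ℝ} (hq : q ≤ 0) (a b : ℕ) (ha : 1 ≤ a) :
    AntitoneOn (fun x : ℝ => x ^ q) (Set.Icc (a:ℝ) b) := by
  intro x hx y hy hxy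
  have ha' : (1:ℝ) ≤ (a:ℝ) := by exact_mod_cast ha
  have hx0 : (0:ℝ) < x := lt_of_lt_of_le (by linarith) hx.1
  exact Real.rpow_le_rpow_of_nonpos hx0 hxy hq

lemma pow_sum_ub (p : ℝ) (hp : -1 < p) (s : ℕ) :
    ∑ i ∈ Icc 1 s, (i:ℝ)^p ≤ (1 + 1/(p+1)) * (s:ℝ)^(p+1) := by
  have hp1 : 0 < p + 1 := by linarith
  rcases Nat.eq_zero_or_pos s with hs | hs
  · subst hs; simp [Real.zero_rpow (ne_of_gt hp1)]
  have hs1 : (1:ℝ) ≤ (s:ℝ) := by exact_mod_cast hs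
  have hsp : (1:ℝ) ≤ (s:ℝ)^(p+1) := Real.one_le_rpow hs1 (le_of_lt hp1)
  rcases le_or_gt 0 p with hp0 | hp0
  · have h1 : ∑ i ∈ Icc 1 s, (i:ℝ)^p ≤ ∑ _i ∈ Icc 1 s, (s:ℝ)^p := by
      apply Finset.sum_le_sum
      intro i hi
      exact Real.rpow_le_rpow (Nat.cast_nonneg i)
        (by exact_mod_cast (Finset.mem_Icc.mp hi).2) hp0
    rw [Finset.sum_const, Nat.card_Icc, nsmul_eq_mul] at h1
    have h2 : ((s + 1 - 1 : ℕ):ℝ) = (s:ℝ) := by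
      rw [Nat.add_sub_cancel]
    rw [h2] at h1
    have h3 : (s:ℝ) * (s:ℝ)^p = (s:ℝ)^(p+1) := by
      rw [Real.rpow_add (by positivity), Real.rpow_one]; ring
    rw [h3] at h1
    have h4 : (0:ℝ) < 1/(p+1) := by positivity
    nlinarith
  · have hsplit : ∑ i ∈ Icc 1 s, (i:ℝ)^p = 1 + ∑ i ∈ Icc 2 s, (i:ℝ)^p := by
      rw [← Finset.Ico_add_one_right_eq_Icc, Finset.sum_eq_sum_Ico_succ_bot (by omega) (fun i : ℕ => (i:ℝ)^p),
        Finset.Ico_add_one_right_eq_Icc]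
      norm_num
    have hmain : ∑ i ∈ Icc 2 s, (i:ℝ)^p ≤ ((s:ℝ)^(p+1) - 1)/(p+1) := by
      have hanti := anti_rpow (le_of_lt hp0) 1 s (le_refl 1)
      have hint := AntitoneOn.sum_le_integral_Ico (f := fun x : ℝ => x ^ p)
        (hs : 1 ≤ s) (by exact_mod_cast hanti)
      rw [integral_rpow (Or.inl hp)] at hint
      have hre := sum_shift (fun x => x ^ p) 1 s
      simp only [Nat.cast_one, Real.one_rpow] at hint
      calc ∑ i ∈ Icc 2 s, (i:ℝ)^p = ∑ i ∈ Ico 1 s, ((i:ℝ) + 1)^p := by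
            rw [hre]
        _ = ∑ i ∈ Ico 1 s, ((((i+1):ℕ)):ℝ)^p := by
            apply Finset.sum_congr rfl; intro i _; push_cast; ring_nf
        _ ≤ ((s:ℝ)^(p+1) - 1)/(p+1) := hint
    rw [hsplit]
    have harith : 1 + ((s:ℝ)^(p+1) - 1)/(p+1) ≤ (1 + 1/(p+1)) * (s:ℝ)^(p+1) := by
      rw [← sub_nonneg]
      have hdiff : (1 + 1/(p+1)) * (s:ℝ)^(p+1) - (1 + ((s:ℝ)^(p+1) - 1)/(p+1)) =
          ((p+1) * (s:ℝ)^(p+1) - p) / (p+1) := by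
        field_simp; ring
      rw [hdiff]
      apply div_nonneg _ (le_of_lt hp1)
      nlinarith
    linarith [hmain]

lemma tail_sum_ub (q : ℝ) (hq : q < -1) (a s : ℕ) (ha : 1 ≤ a) :
    ∑ i ∈ Icc a s, (i:ℝ)^q ≤ (1 + 1/(-(q+1))) * (a:ℝ)^(q+1) := by
  have hq1 : 0 < -(q+1) := by linarith
  have ha1 : (1:ℝ) ≤ (a:ℝ) := by exact_mod_cast ha
  have hC : (0:ℝ) < 1 + 1/(-(q+1)) := by positivity
  have hapos : (0:ℝ) < (a:ℝ)^(q+1) := Real.rpow_pos_of_pos (by linarith) _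
  rcases lt_or_ge s a with hsa | hsa
  · rw [Finset.Icc_eq_empty (not_le.mpr hsa), Finset.sum_empty]
    positivity
  · have hsplit : ∑ i ∈ Icc a s, (i:ℝ)^q = (a:ℝ)^q + ∑ i ∈ Icc (a+1) s, (i:ℝ)^q := by
      rw [← Finset.Ico_add_one_right_eq_Icc, Finset.sum_eq_sum_Ico_succ_bot (by omega) (fun i : ℕ => (i:ℝ)^q),
        Finset.Ico_add_one_right_eq_Icc]
    have hanti := anti_rpow (le_of_lt (by linarith : q < 0)) a s ha
    have hint := AntitoneOn.sum_le_integral_Ico (f := fun x : ℝ => x ^ q) hsa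
      (by exact_mod_cast hanti)
    have h0 : (0:ℝ) ∉ Set.uIcc (a:ℝ) (s:ℝ) := by
      rw [Set.uIcc_of_le (by exact_mod_cast hsa)]
      intro h
      exact absurd (Set.mem_Icc.mp h).1 (by push_neg; linarith)
    rw [integral_rpow (Or.inr ⟨by linarith, h0⟩)] at hint
    have hre := sum_shift (fun x => x ^ q) a s
    have hmain : ∑ i ∈ Icc (a+1) s, (i:ℝ)^q ≤ ((s:ℝ)^(q+1) - (a:ℝ)^(q+1))/(q+1) := by
      calc ∑ i ∈ Icc (a+1) s, (i:ℝ)^q = ∑ i ∈ Ico a s, ((((i+1):ℕ)):ℝ)^q := by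
            rw [← hre]; apply Finset.sum_congr rfl; intro i _; push_cast; ring_nf
        _ ≤ ((s:ℝ)^(q+1) - (a:ℝ)^(q+1))/(q+1) := hint
    have hs0 : (0:ℝ) ≤ (s:ℝ)^(q+1) := Real.rpow_nonneg (Nat.cast_nonneg s) _
    have haq : (a:ℝ)^q ≤ (a:ℝ)^(q+1) := Real.rpow_le_rpow_of_exponent_le ha1 (by linarith)
    have heq : ((s:ℝ)^(q+1) - (a:ℝ)^(q+1))/(q+1) = ((a:ℝ)^(q+1) - (s:ℝ)^(q+1))/(-(q+1)) := by
      rw [div_eq_div_iff (by linarith) (by linarith)]; ring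
    have hfrac : ((s:ℝ)^(q+1) - (a:ℝ)^(q+1))/(q+1) ≤ (a:ℝ)^(q+1)/(-(q+1)) := by
      rw [heq, div_le_div_iff_of_pos_right hq1]
      linarith
    rw [hsplit]
    have hexp : (1 + 1/(-(q+1))) * (a:ℝ)^(q+1) = (a:ℝ)^(q+1) + (a:ℝ)^(q+1)/(-(q+1)) := by
      field_simp
    linarith [hmain, hfrac]

lemma pow_sum_lb (p : ℝ) (t : ℝ) (ht : 2 ≤ t) :
    (4:ℝ)^(-(max p 0) - 1) * t^(p+1) ≤ ∑ i ∈ Icc 1 ⌊t⌋₊, (i:ℝ)^p := by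
  have ht0 : (0:ℝ) < t := by linarith
  set s := ⌊t⌋₊ with hsdef
  have hs2 : 2 ≤ s := Nat.le_floor (by exact_mod_cast ht)
  have hst : (s:ℝ) ≤ t := Nat.floor_le (by linarith)
  have hts : t < (s:ℝ) + 1 := Nat.lt_floor_add_one t
  have hhalf : ((s/2 : ℕ):ℝ) ≤ (s:ℝ)/2 := Nat.cast_div_le
  have hhalf2 : ((s:ℝ) - 1)/2 ≤ ((s/2 : ℕ):ℝ) := by
    have : s ≤ 2*(s/2)+1 := by omega
    have := (Nat.cast_le (α := ℝ)).mpr this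
    push_cast at this
    linarith
  -- every i in Icc (s/2+1) s satisfies t/4 ≤ i ≤ t
  have hmem : ∀ i ∈ Icc (s/2+1) s, t/4 ≤ (i:ℝ) ∧ (i:ℝ) ≤ t := by
    intro i hi
    obtain ⟨h1, h2⟩ := Finset.mem_Icc.mp hi
    constructor
    · have : ((s/2:ℕ):ℝ) + 1 ≤ (i:ℝ) := by exact_mod_cast h1
      have h3 : ((s:ℝ) + 1)/2 ≤ ((s/2:ℕ):ℝ) + 1 := by linarith
      linarith
    · calc (i:ℝ) ≤ (s:ℝ) := by exact_mod_cast h2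
        _ ≤ t := hst
  have hb : ∀ i ∈ Icc (s/2+1) s, (4:ℝ)^(-(max p 0)) * t^p ≤ (i:ℝ)^p := by
    intro i hi
    obtain ⟨h1, h2⟩ := hmem i hi
    have hi0 : (0:ℝ) < (i:ℝ) := by linarith [ht0]
    rcases le_or_gt 0 p with hp0 | hp0
    · rw [max_eq_left hp0]
      have : (4:ℝ)^(-p) * t^p = (t/4)^p := by
        rw [Real.div_rpow (le_of_lt ht0) (by norm_num), Real.rpow_neg (by norm_num)]
        ring
      rw [this]
      exact Real.rpow_le_rpow (by positivity) h1 hp0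
    · rw [max_eq_right (le_of_lt hp0), neg_zero, Real.rpow_zero, one_mul]
      exact Real.rpow_le_rpow_of_nonpos hi0 h2 (le_of_lt hp0)
  have hcard : t/4 ≤ ((Icc (s/2+1) s).card : ℝ) := by
    rw [Nat.card_Icc]
    have : (s + 1 - (s/2+1)) = s - s/2 := by omega
    rw [this]
    have h4 : ((s - s/2 : ℕ):ℝ) = (s:ℝ) - ((s/2:ℕ):ℝ) := by
      have : s/2 ≤ s := Nat.div_le_self s 2
      push_cast [Nat.cast_sub this]
      ring
    rw [h4]
    have : (s:ℝ)/2 ≥ t/2 - 1 := by linarith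
    linarith
  have hsum : ((Icc (s/2+1) s).card : ℝ) * ((4:ℝ)^(-(max p 0)) * t^p) ≤
      ∑ i ∈ Icc (s/2+1) s, (i:ℝ)^p := by
    have := Finset.card_nsmul_le_sum (Icc (s/2+1) s) (fun i => (i:ℝ)^p)
      ((4:ℝ)^(-(max p 0)) * t^p) hb
    rwa [nsmul_eq_mul] at this
  have hsub : ∑ i ∈ Icc (s/2+1) s, (i:ℝ)^p ≤ ∑ i ∈ Icc 1 s, (i:ℝ)^p := by
    apply Finset.sum_le_sum_of_subset_of_nonneg
    · apply Finset.Icc_subset_Icc_left; omega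
    · intro i _ _; exact Real.rpow_nonneg (Nat.cast_nonneg i) p
  have hb0 : (0:ℝ) < (4:ℝ)^(-(max p 0)) * t^p := by
    have := Real.rpow_pos_of_pos (show (0:ℝ) < 4 by norm_num) (-(max p 0))
    have := Real.rpow_pos_of_pos ht0 p
    positivity
  have hkey : (4:ℝ)^(-(max p 0) - 1) * t^(p+1) = (t/4) * ((4:ℝ)^(-(max p 0)) * t^p) := by
    rw [Real.rpow_sub (by norm_num), Real.rpow_one, Real.rpow_add ht0, Real.rpow_one]
    ring
  rw [hkey]
  calc (t/4) * ((4:ℝ)^(-(max p 0)) * t^p)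
      ≤ ((Icc (s/2+1) s).card : ℝ) * ((4:ℝ)^(-(max p 0)) * t^p) := by
        apply mul_le_mul_of_nonneg_right hcard (le_of_lt hb0)
    _ ≤ ∑ i ∈ Icc (s/2+1) s, (i:ℝ)^p := hsum
    _ ≤ ∑ i ∈ Icc 1 s, (i:ℝ)^p := hsub

lemma rpow_div_key (x b g : ℝ) (hx : 0 < x) (hb : 0 ≤ b) :
    x^g * (b/x)^(g+1) = b^(g+1) * x⁻¹ := by
  rw [Real.div_rpow hb hx.le, Real.rpow_add hx, Real.rpow_one]
  have h1 : x^g ≠ 0 := ne_of_gt (Real.rpow_pos_of_pos hx g)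
  field_simp

section Main

variable {γ m ν : ℝ}

/-- term upper bound 1 -/
lemma term_ub1 (hν : 0 ≤ ν) {A x : ℝ} (hA : 0 < A) (hx : 0 < x) :
    x^γ / (x^m + A)^ν ≤ x^γ * A^(-ν) := by
  have hd : A^ν ≤ (x^m + A)^ν :=
    Real.rpow_le_rpow hA.le (le_add_of_nonneg_left (Real.rpow_nonneg hx.le m)) hν
  have hA' : (0:ℝ) < A^ν := Real.rpow_pos_of_pos hA ν
  calc x^γ / (x^m + A)^ν ≤ x^γ / A^ν :=
        div_le_div_of_nonneg_left (Real.rpow_nonneg hx.le γ) hA' hd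
    _ = x^γ * A^(-ν) := by rw [Real.rpow_neg hA.le, div_eq_mul_inv]

/-- term upper bound 2 -/
lemma term_ub2 (hν : 0 ≤ ν) {A x : ℝ} (hA : 0 < A) (hx : 0 < x) :
    x^γ / (x^m + A)^ν ≤ x^(γ - m*ν) := by
  have hxm : (0:ℝ) < x^m := Real.rpow_pos_of_pos hx m
  have hd : x^(m*ν) ≤ (x^m + A)^ν := by
    rw [Real.rpow_mul hx.le]
    exact Real.rpow_le_rpow hxm.le (le_add_of_nonneg_right hA.le) hν
  have hx' : (0:ℝ) < x^(m*ν) := Real.rpow_pos_of_pos hx _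
  calc x^γ / (x^m + A)^ν ≤ x^γ / x^(m*ν) :=
        div_le_div_of_nonneg_left (Real.rpow_nonneg hx.le γ) hx' hd
    _ = x^(γ - m*ν) := by rw [← Real.rpow_sub hx]

/-- term lower bound -/
lemma term_lb (hν : 0 ≤ ν) {A x : ℝ} (hA : 0 < A) (hx : 0 < x) (hxm : x^m ≤ A) :
    (2:ℝ)^(-ν) * (x^γ * A^(-ν)) ≤ x^γ / (x^m + A)^ν := by
  have hxm0 : (0:ℝ) < x^m := Real.rpow_pos_of_pos hx m
  have hd : (x^m + A)^ν ≤ (2*A)^ν :=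
    Real.rpow_le_rpow (by linarith) (by linarith) hν
  have hd0 : (0:ℝ) < (x^m + A)^ν :=
    Real.rpow_pos_of_pos (by linarith) ν
  have h2A : (0:ℝ) < (2*A)^ν := Real.rpow_pos_of_pos (by linarith) ν
  calc (2:ℝ)^(-ν) * (x^γ * A^(-ν)) = x^γ / (2*A)^ν := by
        rw [Real.mul_rpow (by norm_num) hA.le, Real.rpow_neg (by norm_num),
          Real.rpow_neg hA.le, div_eq_mul_inv, mul_inv]
        ring
    _ ≤ x^γ / (x^m + A)^ν :=
        div_le_div_of_nonneg_left (Real.rpow_nonneg hx.le γ) hd0 hd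

lemma term_nonneg {A x : ℝ} (hA : 0 ≤ A) (hx : 0 ≤ x) : 0 ≤ x^γ / (x^m + A)^ν := by
  apply div_nonneg (Real.rpow_nonneg hx γ) (Real.rpow_nonneg ?_ ν)
  have := Real.rpow_nonneg hx m
  linarith

end Main

lemma icc_split (k n : ℕ) (h : k ≤ n) (f : ℕ → ℝ) :
    ∑ i ∈ Icc 1 n, f i = ∑ i ∈ Icc 1 k, f i + ∑ i ∈ Icc (k+1) n, f i := by
  have h1 : Icc 1 n = Ioc 0 n := by ext i; simp [Nat.lt_iff_add_one_le]
  have h2 : Icc 1 k = Ioc 0 k := by ext i; simp [Nat.lt_iff_add_one_le]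
  have h3 : Icc (k+1) n = Ioc k n := by ext i; simp only [Finset.mem_Icc, Finset.mem_Ioc]; omega
  rw [h1, h2, h3, Finset.sum_Ioc_consecutive _ (Nat.zero_le k) h]

lemma t_le_div {n i : ℕ} {B : ℝ} (hB : 0 ≤ B) :
    ((min n ⌊B/(i:ℝ)⌋₊ : ℕ) : ℝ) ≤ B/(i:ℝ) := by
  calc ((min n ⌊B/(i:ℝ)⌋₊ : ℕ) : ℝ) ≤ (⌊B/(i:ℝ)⌋₊ : ℝ) := by
        exact_mod_cast min_le_right n _
    _ ≤ B/(i:ℝ) := Nat.floor_le (by positivity)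

lemma P1_caseA {γ : ℝ} (hγ : -1 < γ) {n : ℕ} {B : ℝ} (hB4 : 4 ≤ B) (hBn : B ≤ (n:ℝ)) :
    ∑ i ∈ Icc 1 n, (i:ℝ)^γ * (∑ j ∈ Icc 1 (min n ⌊B/(i:ℝ)⌋₊), (j:ℝ)^γ)
      ≤ (1 + 1/(γ+1)) * (B^(γ+1) * (1 + Real.log B)) := by
  have hB0 : (0:ℝ) < B := by linarith
  have hγ1 : (0:ℝ) < γ+1 := by linarith
  have hCγ : (0:ℝ) < 1 + 1/(γ+1) := by positivity
  set Cγ := 1 + 1/(γ+1) with hCγdef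
  set M := ⌊B⌋₊ with hMdef
  have hMn : M ≤ n := by
    have := Nat.floor_mono hBn
    rwa [Nat.floor_natCast] at this
  have hMB : (M:ℝ) ≤ B := Nat.floor_le hB0.le
  have hM1 : 1 ≤ M := Nat.le_floor (by norm_num; linarith)
  have step1 : ∑ i ∈ Icc 1 n, (i:ℝ)^γ * (∑ j ∈ Icc 1 (min n ⌊B/(i:ℝ)⌋₊), (j:ℝ)^γ)
      ≤ ∑ i ∈ Icc 1 n, (i:ℝ)^γ * (Cγ * ((min n ⌊B/(i:ℝ)⌋₊ : ℕ):ℝ)^(γ+1)) := by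
    apply Finset.sum_le_sum
    intro i _
    exact mul_le_mul_of_nonneg_left (pow_sum_ub γ hγ _) (Real.rpow_nonneg (Nat.cast_nonneg i) γ)
  nth_rewrite 2 [icc_split M n hMn] at step1
  have block2 : ∑ i ∈ Icc (M+1) n, (i:ℝ)^γ * (Cγ * ((min n ⌊B/(i:ℝ)⌋₊ : ℕ):ℝ)^(γ+1)) = 0 := by
    apply Finset.sum_eq_zero
    intro i hi
    obtain ⟨h1, _⟩ := Finset.mem_Icc.mp hi
    have hiB : B < (i:ℝ) := by
      have : (M:ℝ) + 1 ≤ (i:ℝ) := by exact_mod_cast h1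
      have := Nat.lt_floor_add_one B
      linarith
    have hfl : ⌊B/(i:ℝ)⌋₊ = 0 := by
      apply Nat.floor_eq_zero.mpr
      rw [div_lt_one (by linarith)]
      exact hiB
    rw [hfl, Nat.min_zero]
    rw [Nat.cast_zero, Real.zero_rpow (by linarith)]
    ring
  have block1 : ∑ i ∈ Icc 1 M, (i:ℝ)^γ * (Cγ * ((min n ⌊B/(i:ℝ)⌋₊ : ℕ):ℝ)^(γ+1))
      ≤ Cγ * B^(γ+1) * ∑ i ∈ Icc 1 M, ((i:ℝ))⁻¹ := by
    rw [Finset.mul_sum]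
    apply Finset.sum_le_sum
    intro i hi
    obtain ⟨h1, _⟩ := Finset.mem_Icc.mp hi
    have hi0 : (0:ℝ) < (i:ℝ) := by exact_mod_cast Nat.lt_of_lt_of_le Nat.zero_lt_one h1
    have ht : ((min n ⌊B/(i:ℝ)⌋₊ : ℕ):ℝ)^(γ+1) ≤ (B/(i:ℝ))^(γ+1) :=
      Real.rpow_le_rpow (Nat.cast_nonneg _) (t_le_div hB0.le) (by linarith)
    calc (i:ℝ)^γ * (Cγ * ((min n ⌊B/(i:ℝ)⌋₊ : ℕ):ℝ)^(γ+1))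
        ≤ (i:ℝ)^γ * (Cγ * (B/(i:ℝ))^(γ+1)) := by
          apply mul_le_mul_of_nonneg_left _ (Real.rpow_nonneg (Nat.cast_nonneg i) γ)
          exact mul_le_mul_of_nonneg_left ht (le_of_lt hCγ)
      _ = Cγ * B^(γ+1) * ((i:ℝ))⁻¹ := by
          rw [show (i:ℝ)^γ * (Cγ * (B/(i:ℝ))^(γ+1)) = Cγ * ((i:ℝ)^γ * (B/(i:ℝ))^(γ+1)) by ring,
            rpow_div_key (i:ℝ) B γ hi0 hB0.le]
          ring
  have harm : ∑ i ∈ Icc 1 M, ((i:ℝ))⁻¹ ≤ 1 + Real.log B := by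
    have h := harm_ub 1 le_rfl M
    have hle : max ((M:ℝ)/1) 1 ≤ B := by
      rw [max_le_iff]
      constructor
      · rw [div_one]; exact hMB
      · linarith
    have := Real.log_le_log (by positivity) hle
    linarith
  have hlogB : (0:ℝ) ≤ Real.log B := Real.log_nonneg (by linarith)
  have hBp : (0:ℝ) < B^(γ+1) := Real.rpow_pos_of_pos hB0 _
  calc ∑ i ∈ Icc 1 n, (i:ℝ)^γ * (∑ j ∈ Icc 1 (min n ⌊B/(i:ℝ)⌋₊), (j:ℝ)^γ)
      ≤ ∑ i ∈ Icc 1 M, (i:ℝ)^γ * (Cγ * ((min n ⌊B/(i:ℝ)⌋₊ : ℕ):ℝ)^(γ+1))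
        + ∑ i ∈ Icc (M+1) n, (i:ℝ)^γ * (Cγ * ((min n ⌊B/(i:ℝ)⌋₊ : ℕ):ℝ)^(γ+1)) := step1
    _ ≤ Cγ * B^(γ+1) * (1 + Real.log B) + 0 := by
        rw [block2]
        have := mul_le_mul_of_nonneg_left harm (le_of_lt (by positivity : (0:ℝ) < Cγ * B^(γ+1)))
        linarith [block1]
    _ ≤ Cγ * (B^(γ+1) * (1 + Real.log B)) := by rw [add_zero]; ring_nf; linarith [le_refl (0:ℝ)]

lemma P2_caseA {β : ℝ} (hβ : β < -1) {n : ℕ} {B : ℝ} (hB4 : 4 ≤ B) (hBn : B ≤ (n:ℝ)) :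
    ∑ i ∈ Icc 1 n, (i:ℝ)^β * (∑ j ∈ Icc (min n ⌊B/(i:ℝ)⌋₊ + 1) n, (j:ℝ)^β)
      ≤ ((1 + 1/(-(β+1))) + (1 + 1/(-(β+1)))^2) * (B^(β+1) * (1 + Real.log B)) := by
  have hB0 : (0:ℝ) < B := by linarith
  have hβ1 : β + 1 < 0 := by linarith
  have hCβ : (0:ℝ) < 1 + 1/(-(β+1)) := by
    have : (0:ℝ) < -(β+1) := by linarith
    positivity
  set Cβ := 1 + 1/(-(β+1)) with hCβdef
  set M := ⌊B⌋₊ with hMdef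
  have hMn : M ≤ n := by
    have := Nat.floor_mono hBn
    rwa [Nat.floor_natCast] at this
  have hMB : (M:ℝ) ≤ B := Nat.floor_le hB0.le
  have hM1 : 1 ≤ M := Nat.le_floor (by norm_num; linarith)
  have step1 : ∑ i ∈ Icc 1 n, (i:ℝ)^β * (∑ j ∈ Icc (min n ⌊B/(i:ℝ)⌋₊ + 1) n, (j:ℝ)^β)
      ≤ ∑ i ∈ Icc 1 n, (i:ℝ)^β * (Cβ * ((min n ⌊B/(i:ℝ)⌋₊ + 1 : ℕ):ℝ)^(β+1)) := by
    apply Finset.sum_le_sum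
    intro i _
    exact mul_le_mul_of_nonneg_left (tail_sum_ub β hβ _ n (by omega))
      (Real.rpow_nonneg (Nat.cast_nonneg i) β)
  nth_rewrite 2 [icc_split M n hMn] at step1
  have block1 : ∑ i ∈ Icc 1 M, (i:ℝ)^β * (Cβ * ((min n ⌊B/(i:ℝ)⌋₊ + 1 : ℕ):ℝ)^(β+1))
      ≤ Cβ * B^(β+1) * ∑ i ∈ Icc 1 M, ((i:ℝ))⁻¹ := by
    rw [Finset.mul_sum]
    apply Finset.sum_le_sum
    intro i hi
    obtain ⟨h1, h2⟩ := Finset.mem_Icc.mp hi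
    have hi0 : (0:ℝ) < (i:ℝ) := by exact_mod_cast Nat.lt_of_lt_of_le Nat.zero_lt_one h1
    have hiB : (i:ℝ) ≤ B := le_trans (by exact_mod_cast h2) hMB
    have hdiv0 : (0:ℝ) < B/(i:ℝ) := by positivity
    -- floor (B/i) ≤ floor B ≤ n, so min = floor(B/i)
    have hflle : ⌊B/(i:ℝ)⌋₊ ≤ n := le_trans (Nat.floor_mono (by
      apply div_le_self hB0.le
      exact_mod_cast h1)) hMn
    have hmin : min n ⌊B/(i:ℝ)⌋₊ = ⌊B/(i:ℝ)⌋₊ := min_eq_right hflle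
    have hge : B/(i:ℝ) ≤ ((min n ⌊B/(i:ℝ)⌋₊ + 1 : ℕ):ℝ) := by
      rw [hmin]
      push_cast
      exact le_of_lt (Nat.lt_floor_add_one _)
    have ht : ((min n ⌊B/(i:ℝ)⌋₊ + 1 : ℕ):ℝ)^(β+1) ≤ (B/(i:ℝ))^(β+1) :=
      Real.rpow_le_rpow_of_nonpos hdiv0 hge (by linarith)
    calc (i:ℝ)^β * (Cβ * ((min n ⌊B/(i:ℝ)⌋₊ + 1 : ℕ):ℝ)^(β+1))
        ≤ (i:ℝ)^β * (Cβ * (B/(i:ℝ))^(β+1)) := by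
          apply mul_le_mul_of_nonneg_left _ (Real.rpow_nonneg (Nat.cast_nonneg i) β)
          exact mul_le_mul_of_nonneg_left ht (le_of_lt hCβ)
      _ = Cβ * B^(β+1) * ((i:ℝ))⁻¹ := by
          rw [show (i:ℝ)^β * (Cβ * (B/(i:ℝ))^(β+1)) = Cβ * ((i:ℝ)^β * (B/(i:ℝ))^(β+1)) by ring,
            rpow_div_key (i:ℝ) B β hi0 hB0.le]
          ring
  have block2 : ∑ i ∈ Icc (M+1) n, (i:ℝ)^β * (Cβ * ((min n ⌊B/(i:ℝ)⌋₊ + 1 : ℕ):ℝ)^(β+1))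
      ≤ Cβ * (Cβ * B^(β+1)) := by
    have hstep : ∑ i ∈ Icc (M+1) n, (i:ℝ)^β * (Cβ * ((min n ⌊B/(i:ℝ)⌋₊ + 1 : ℕ):ℝ)^(β+1))
        ≤ ∑ i ∈ Icc (M+1) n, Cβ * (i:ℝ)^β := by
      apply Finset.sum_le_sum
      intro i hi
      have h1 : (1:ℝ) ≤ ((min n ⌊B/(i:ℝ)⌋₊ + 1 : ℕ):ℝ) := by
        have : (1:ℕ) ≤ min n ⌊B/(i:ℝ)⌋₊ + 1 := Nat.le_add_left 1 _
        exact_mod_cast this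
      have ht : ((min n ⌊B/(i:ℝ)⌋₊ + 1 : ℕ):ℝ)^(β+1) ≤ 1 := by
        have := Real.rpow_le_rpow_of_nonpos (by norm_num : (0:ℝ) < 1) h1 (le_of_lt hβ1)
        rwa [Real.one_rpow] at this
      calc (i:ℝ)^β * (Cβ * ((min n ⌊B/(i:ℝ)⌋₊ + 1 : ℕ):ℝ)^(β+1))
          ≤ (i:ℝ)^β * (Cβ * 1) := by
            apply mul_le_mul_of_nonneg_left _ (Real.rpow_nonneg (Nat.cast_nonneg i) β)
            exact mul_le_mul_of_nonneg_left ht (le_of_lt hCβ)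
        _ = Cβ * (i:ℝ)^β := by ring
    rw [← Finset.mul_sum] at hstep
    have htail : ∑ i ∈ Icc (M+1) n, (i:ℝ)^β ≤ Cβ * ((M+1:ℕ):ℝ)^(β+1) :=
      tail_sum_ub β hβ (M+1) n (by omega)
    have hM1B : ((M+1:ℕ):ℝ)^(β+1) ≤ B^(β+1) := by
      apply Real.rpow_le_rpow_of_nonpos hB0 _ (le_of_lt hβ1)
      push_cast
      linarith [Nat.lt_floor_add_one B]
    have hsum_nonneg : (0:ℝ) ≤ ∑ i ∈ Icc (M+1) n, (i:ℝ)^β :=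
      Finset.sum_nonneg fun i _ => Real.rpow_nonneg (Nat.cast_nonneg i) β
    calc ∑ i ∈ Icc (M+1) n, (i:ℝ)^β * (Cβ * ((min n ⌊B/(i:ℝ)⌋₊ + 1 : ℕ):ℝ)^(β+1))
        ≤ Cβ * ∑ i ∈ Icc (M+1) n, (i:ℝ)^β := hstep
      _ ≤ Cβ * (Cβ * ((M+1:ℕ):ℝ)^(β+1)) := by
          apply mul_le_mul_of_nonneg_left htail (le_of_lt hCβ)
      _ ≤ Cβ * (Cβ * B^(β+1)) := by
          apply mul_le_mul_of_nonneg_left _ (le_of_lt hCβ)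
          exact mul_le_mul_of_nonneg_left hM1B (le_of_lt hCβ)
  have harm : ∑ i ∈ Icc 1 M, ((i:ℝ))⁻¹ ≤ 1 + Real.log B := by
    have h := harm_ub 1 le_rfl M
    have hle : max ((M:ℝ)/1) 1 ≤ B := by
      rw [max_le_iff]
      constructor
      · rw [div_one]; exact hMB
      · linarith
    have := Real.log_le_log (by positivity) hle
    linarith
  have hlogB : (0:ℝ) ≤ Real.log B := Real.log_nonneg (by linarith)
  have hBp : (0:ℝ) < B^(β+1) := Real.rpow_pos_of_pos hB0 _
  have hb1 : ∑ i ∈ Icc 1 M, (i:ℝ)^β * (Cβ * ((min n ⌊B/(i:ℝ)⌋₊ + 1 : ℕ):ℝ)^(β+1))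
      ≤ Cβ * B^(β+1) * (1 + Real.log B) := by
    have := mul_le_mul_of_nonneg_left harm (le_of_lt (by positivity : (0:ℝ) < Cβ * B^(β+1)))
    linarith [block1]
  have final : ∑ i ∈ Icc 1 n, (i:ℝ)^β * (∑ j ∈ Icc (min n ⌊B/(i:ℝ)⌋₊ + 1) n, (j:ℝ)^β)
      ≤ Cβ * B^(β+1) * (1 + Real.log B) + Cβ * (Cβ * B^(β+1)) := by linarith [step1]
  calc ∑ i ∈ Icc 1 n, (i:ℝ)^β * (∑ j ∈ Icc (min n ⌊B/(i:ℝ)⌋₊ + 1) n, (j:ℝ)^β)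
      ≤ Cβ * B^(β+1) * (1 + Real.log B) + Cβ * (Cβ * B^(β+1)) := final
    _ ≤ (Cβ + Cβ^2) * (B^(β+1) * (1 + Real.log B)) := by
        nlinarith [mul_nonneg (mul_nonneg (sq_nonneg Cβ) hBp.le) hlogB]

lemma P1_caseB {γ : ℝ} (hγ : -1 < γ) {n : ℕ} {B : ℝ} (hB4 : 4 ≤ B) (hnB : (n:ℝ) ≤ B)
    (hBn2 : B ≤ (n:ℝ)^2) (hn : 1 ≤ n) :
    ∑ i ∈ Icc 1 n, (i:ℝ)^γ * (∑ j ∈ Icc 1 (min n ⌊B/(i:ℝ)⌋₊), (j:ℝ)^γ)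
      ≤ ((1 + 1/(γ+1)) + (1 + 1/(γ+1))^2) * (B^(γ+1) * (1 + Real.log ((n:ℝ)^2/B))) := by
  have hB0 : (0:ℝ) < B := by linarith
  have hγ1 : (0:ℝ) < γ+1 := by linarith
  have hCγ : (0:ℝ) < 1 + 1/(γ+1) := by positivity
  have hn0 : (0:ℝ) < (n:ℝ) := by exact_mod_cast hn
  set Cγ := 1 + 1/(γ+1) with hCγdef
  set a := ⌊B/(n:ℝ)⌋₊ with hadef
  have hBn_div : B/(n:ℝ) ≤ (n:ℝ) := by
    rw [div_le_iff₀ hn0]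
    calc B ≤ (n:ℝ)^2 := hBn2
      _ = (n:ℝ) * (n:ℝ) := sq (n:ℝ)
  have han : a ≤ n := by
    have := Nat.floor_mono hBn_div
    rwa [Nat.floor_natCast] at this
  have haB : (a:ℝ) ≤ B/(n:ℝ) := Nat.floor_le (by positivity)
  have ha1 : B/(n:ℝ) < (a:ℝ) + 1 := Nat.lt_floor_add_one _
  have hD1 : (1:ℝ) ≤ (n:ℝ)^2/B := by
    rw [le_div_iff₀ hB0]; linarith
  have hlogD : (0:ℝ) ≤ Real.log ((n:ℝ)^2/B) := Real.log_nonneg hD1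
  have hBp : (0:ℝ) < B^(γ+1) := Real.rpow_pos_of_pos hB0 _
  have step1 : ∑ i ∈ Icc 1 n, (i:ℝ)^γ * (∑ j ∈ Icc 1 (min n ⌊B/(i:ℝ)⌋₊), (j:ℝ)^γ)
      ≤ ∑ i ∈ Icc 1 n, (i:ℝ)^γ * (Cγ * ((min n ⌊B/(i:ℝ)⌋₊ : ℕ):ℝ)^(γ+1)) := by
    apply Finset.sum_le_sum
    intro i _
    exact mul_le_mul_of_nonneg_left (pow_sum_ub γ hγ _) (Real.rpow_nonneg (Nat.cast_nonneg i) γ)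
  nth_rewrite 2 [icc_split a n han] at step1
  -- block 1 : i ≤ a
  have block1 : ∑ i ∈ Icc 1 a, (i:ℝ)^γ * (Cγ * ((min n ⌊B/(i:ℝ)⌋₊ : ℕ):ℝ)^(γ+1))
      ≤ Cγ^2 * B^(γ+1) := by
    have hstep : ∑ i ∈ Icc 1 a, (i:ℝ)^γ * (Cγ * ((min n ⌊B/(i:ℝ)⌋₊ : ℕ):ℝ)^(γ+1))
        ≤ ∑ i ∈ Icc 1 a, (Cγ * (n:ℝ)^(γ+1)) * (i:ℝ)^γ := by
      apply Finset.sum_le_sum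
      intro i _
      have htn : ((min n ⌊B/(i:ℝ)⌋₊ : ℕ):ℝ) ≤ (n:ℝ) := by exact_mod_cast min_le_left n _
      have ht : ((min n ⌊B/(i:ℝ)⌋₊ : ℕ):ℝ)^(γ+1) ≤ (n:ℝ)^(γ+1) :=
        Real.rpow_le_rpow (Nat.cast_nonneg _) htn (by linarith)
      calc (i:ℝ)^γ * (Cγ * ((min n ⌊B/(i:ℝ)⌋₊ : ℕ):ℝ)^(γ+1))
          ≤ (i:ℝ)^γ * (Cγ * (n:ℝ)^(γ+1)) := by
            apply mul_le_mul_of_nonneg_left _ (Real.rpow_nonneg (Nat.cast_nonneg i) γ)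
            exact mul_le_mul_of_nonneg_left ht (le_of_lt hCγ)
        _ = (Cγ * (n:ℝ)^(γ+1)) * (i:ℝ)^γ := by ring
    rw [← Finset.mul_sum] at hstep
    have hpow : ∑ i ∈ Icc 1 a, (i:ℝ)^γ ≤ Cγ * (a:ℝ)^(γ+1) := pow_sum_ub γ hγ a
    have haB' : (a:ℝ)^(γ+1) ≤ (B/(n:ℝ))^(γ+1) :=
      Real.rpow_le_rpow (Nat.cast_nonneg a) haB (by linarith)
    have hnB' : (n:ℝ)^(γ+1) * (B/(n:ℝ))^(γ+1) = B^(γ+1) := by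
      rw [← Real.mul_rpow hn0.le (by positivity)]
      congr 1
      field_simp
    have hsum_nonneg : (0:ℝ) ≤ ∑ i ∈ Icc 1 a, (i:ℝ)^γ :=
      Finset.sum_nonneg fun i _ => Real.rpow_nonneg (Nat.cast_nonneg i) γ
    have hnn : (0:ℝ) ≤ (n:ℝ)^(γ+1) := Real.rpow_nonneg hn0.le _
    calc ∑ i ∈ Icc 1 a, (i:ℝ)^γ * (Cγ * ((min n ⌊B/(i:ℝ)⌋₊ : ℕ):ℝ)^(γ+1))
        ≤ (Cγ * (n:ℝ)^(γ+1)) * ∑ i ∈ Icc 1 a, (i:ℝ)^γ := hstep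
      _ ≤ (Cγ * (n:ℝ)^(γ+1)) * (Cγ * (a:ℝ)^(γ+1)) := by
          apply mul_le_mul_of_nonneg_left hpow (by positivity)
      _ ≤ (Cγ * (n:ℝ)^(γ+1)) * (Cγ * (B/(n:ℝ))^(γ+1)) := by
          apply mul_le_mul_of_nonneg_left _ (by positivity)
          exact mul_le_mul_of_nonneg_left haB' (le_of_lt hCγ)
      _ = Cγ^2 * ((n:ℝ)^(γ+1) * (B/(n:ℝ))^(γ+1)) := by ring
      _ = Cγ^2 * B^(γ+1) := by rw [hnB']
  -- block 2 : i > a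
  have block2 : ∑ i ∈ Icc (a+1) n, (i:ℝ)^γ * (Cγ * ((min n ⌊B/(i:ℝ)⌋₊ : ℕ):ℝ)^(γ+1))
      ≤ Cγ * B^(γ+1) * (1 + Real.log ((n:ℝ)^2/B)) := by
    have hstep : ∑ i ∈ Icc (a+1) n, (i:ℝ)^γ * (Cγ * ((min n ⌊B/(i:ℝ)⌋₊ : ℕ):ℝ)^(γ+1))
        ≤ ∑ i ∈ Icc (a+1) n, (Cγ * B^(γ+1)) * ((i:ℝ))⁻¹ := by
      apply Finset.sum_le_sum
      intro i hi
      obtain ⟨h1, _⟩ := Finset.mem_Icc.mp hi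
      have hi0 : (0:ℝ) < (i:ℝ) := by
        have : 1 ≤ i := by omega
        exact_mod_cast this
      have ht : ((min n ⌊B/(i:ℝ)⌋₊ : ℕ):ℝ)^(γ+1) ≤ (B/(i:ℝ))^(γ+1) :=
        Real.rpow_le_rpow (Nat.cast_nonneg _) (t_le_div hB0.le) (by linarith)
      calc (i:ℝ)^γ * (Cγ * ((min n ⌊B/(i:ℝ)⌋₊ : ℕ):ℝ)^(γ+1))
          ≤ (i:ℝ)^γ * (Cγ * (B/(i:ℝ))^(γ+1)) := by
            apply mul_le_mul_of_nonneg_left _ (Real.rpow_nonneg (Nat.cast_nonneg i) γ)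
            exact mul_le_mul_of_nonneg_left ht (le_of_lt hCγ)
        _ = (Cγ * B^(γ+1)) * ((i:ℝ))⁻¹ := by
            rw [show (i:ℝ)^γ * (Cγ * (B/(i:ℝ))^(γ+1)) = Cγ * ((i:ℝ)^γ * (B/(i:ℝ))^(γ+1)) by ring,
              rpow_div_key (i:ℝ) B γ hi0 hB0.le]
            ring
    rw [← Finset.mul_sum] at hstep
    have harm : ∑ i ∈ Icc (a+1) n, ((i:ℝ))⁻¹ ≤ 1 + Real.log ((n:ℝ)^2/B) := by
      have h := harm_ub (a+1) (by omega) n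
      have hle : max ((n:ℝ)/((a+1:ℕ):ℝ)) 1 ≤ (n:ℝ)^2/B := by
        rw [max_le_iff]
        constructor
        · have ha1' : B/(n:ℝ) ≤ ((a+1:ℕ):ℝ) := by push_cast; linarith
          have hd0 : (0:ℝ) < B/(n:ℝ) := by positivity
          calc (n:ℝ)/((a+1:ℕ):ℝ) ≤ (n:ℝ)/(B/(n:ℝ)) :=
                div_le_div_of_nonneg_left hn0.le hd0 ha1'
            _ = (n:ℝ)^2/B := by rw [sq]; field_simp
        · exact hD1
      have := Real.log_le_log (by positivity) hle
      linarith
    calc ∑ i ∈ Icc (a+1) n, (i:ℝ)^γ * (Cγ * ((min n ⌊B/(i:ℝ)⌋₊ : ℕ):ℝ)^(γ+1))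
        ≤ (Cγ * B^(γ+1)) * ∑ i ∈ Icc (a+1) n, ((i:ℝ))⁻¹ := hstep
      _ ≤ (Cγ * B^(γ+1)) * (1 + Real.log ((n:ℝ)^2/B)) := by
          apply mul_le_mul_of_nonneg_left harm (by positivity)
      _ = Cγ * B^(γ+1) * (1 + Real.log ((n:ℝ)^2/B)) := by ring
  calc ∑ i ∈ Icc 1 n, (i:ℝ)^γ * (∑ j ∈ Icc 1 (min n ⌊B/(i:ℝ)⌋₊), (j:ℝ)^γ)
      ≤ Cγ^2 * B^(γ+1) + Cγ * B^(γ+1) * (1 + Real.log ((n:ℝ)^2/B)) := by linarith [step1]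
    _ ≤ (Cγ + Cγ^2) * (B^(γ+1) * (1 + Real.log ((n:ℝ)^2/B))) := by
        nlinarith [mul_nonneg (mul_nonneg (sq_nonneg Cγ) hBp.le) hlogD]

lemma P2_caseB {β : ℝ} (hβ : β < -1) {n : ℕ} {B : ℝ} (hB4 : 4 ≤ B) (hnB : (n:ℝ) ≤ B)
    (hBn2 : B ≤ (n:ℝ)^2) (hn : 1 ≤ n) :
    ∑ i ∈ Icc 1 n, (i:ℝ)^β * (∑ j ∈ Icc (min n ⌊B/(i:ℝ)⌋₊ + 1) n, (j:ℝ)^β)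
      ≤ (1 + 1/(-(β+1))) * (B^(β+1) * (1 + Real.log ((n:ℝ)^2/B))) := by
  have hB0 : (0:ℝ) < B := by linarith
  have hβ1 : β + 1 < 0 := by linarith
  have hCβ : (0:ℝ) < 1 + 1/(-(β+1)) := by
    have : (0:ℝ) < -(β+1) := by linarith
    positivity
  have hn0 : (0:ℝ) < (n:ℝ) := by exact_mod_cast hn
  set Cβ := 1 + 1/(-(β+1)) with hCβdef
  set a := ⌊B/(n:ℝ)⌋₊ with hadef
  have hBn_div : B/(n:ℝ) ≤ (n:ℝ) := by
    rw [div_le_iff₀ hn0]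
    calc B ≤ (n:ℝ)^2 := hBn2
      _ = (n:ℝ) * (n:ℝ) := sq (n:ℝ)
  have han : a ≤ n := by
    have := Nat.floor_mono hBn_div
    rwa [Nat.floor_natCast] at this
  have haB : (a:ℝ) ≤ B/(n:ℝ) := Nat.floor_le (by positivity)
  have ha1 : B/(n:ℝ) < (a:ℝ) + 1 := Nat.lt_floor_add_one _
  have hD1 : (1:ℝ) ≤ (n:ℝ)^2/B := by
    rw [le_div_iff₀ hB0]; linarith
  have hlogD : (0:ℝ) ≤ Real.log ((n:ℝ)^2/B) := Real.log_nonneg hD1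
  have hBp : (0:ℝ) < B^(β+1) := Real.rpow_pos_of_pos hB0 _
  rw [icc_split a n han]
  -- block 1 : inner sums are empty
  have block1 : ∑ i ∈ Icc 1 a, (i:ℝ)^β * (∑ j ∈ Icc (min n ⌊B/(i:ℝ)⌋₊ + 1) n, (j:ℝ)^β) = 0 := by
    apply Finset.sum_eq_zero
    intro i hi
    obtain ⟨h1, h2⟩ := Finset.mem_Icc.mp hi
    have hi0 : (0:ℝ) < (i:ℝ) := by exact_mod_cast Nat.lt_of_lt_of_le Nat.zero_lt_one h1
    have hiBn : (i:ℝ) ≤ B/(n:ℝ) := le_trans (by exact_mod_cast h2) haB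
    have hBi : (n:ℝ) ≤ B/(i:ℝ) := by
      rw [le_div_iff₀ hi0]
      rw [le_div_iff₀ hn0] at hiBn
      nlinarith
    have hfl : n ≤ ⌊B/(i:ℝ)⌋₊ := Nat.le_floor (by exact_mod_cast hBi)
    have hmin : min n ⌊B/(i:ℝ)⌋₊ = n := min_eq_left hfl
    rw [hmin, Finset.Icc_eq_empty (by omega), Finset.sum_empty, mul_zero]
  rw [block1, zero_add]
  -- block 2
  have hstep : ∑ i ∈ Icc (a+1) n, (i:ℝ)^β * (∑ j ∈ Icc (min n ⌊B/(i:ℝ)⌋₊ + 1) n, (j:ℝ)^β)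
      ≤ ∑ i ∈ Icc (a+1) n, (Cβ * B^(β+1)) * ((i:ℝ))⁻¹ := by
    apply Finset.sum_le_sum
    intro i hi
    obtain ⟨h1, h2⟩ := Finset.mem_Icc.mp hi
    have hi1 : 1 ≤ i := by omega
    have hi0 : (0:ℝ) < (i:ℝ) := by exact_mod_cast hi1
    have hdiv0 : (0:ℝ) < B/(i:ℝ) := by positivity
    have hinner : ∑ j ∈ Icc (min n ⌊B/(i:ℝ)⌋₊ + 1) n, (j:ℝ)^β
        ≤ Cβ * ((min n ⌊B/(i:ℝ)⌋₊ + 1 : ℕ):ℝ)^(β+1) := tail_sum_ub β hβ _ n (by omega)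
    have hin : B/(n:ℝ) < (i:ℝ) := by
      have : (a:ℝ) + 1 ≤ (i:ℝ) := by exact_mod_cast h1
      linarith
    have hBin : B/(i:ℝ) < (n:ℝ) := by
      rw [div_lt_iff₀ hi0]
      rw [div_lt_iff₀ hn0] at hin
      nlinarith
    have hfl : ⌊B/(i:ℝ)⌋₊ < n := (Nat.floor_lt (by positivity)).mpr hBin
    have hmin : min n ⌊B/(i:ℝ)⌋₊ = ⌊B/(i:ℝ)⌋₊ := min_eq_right (le_of_lt hfl)
    have hge : B/(i:ℝ) ≤ ((min n ⌊B/(i:ℝ)⌋₊ + 1 : ℕ):ℝ) := by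
      rw [hmin]
      push_cast
      exact le_of_lt (Nat.lt_floor_add_one _)
    have ht : ((min n ⌊B/(i:ℝ)⌋₊ + 1 : ℕ):ℝ)^(β+1) ≤ (B/(i:ℝ))^(β+1) :=
      Real.rpow_le_rpow_of_nonpos hdiv0 hge (le_of_lt hβ1)
    have hiβ : (0:ℝ) ≤ (i:ℝ)^β := Real.rpow_nonneg (Nat.cast_nonneg i) β
    calc (i:ℝ)^β * (∑ j ∈ Icc (min n ⌊B/(i:ℝ)⌋₊ + 1) n, (j:ℝ)^β)
        ≤ (i:ℝ)^β * (Cβ * (B/(i:ℝ))^(β+1)) := by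
          apply mul_le_mul_of_nonneg_left _ hiβ
          calc ∑ j ∈ Icc (min n ⌊B/(i:ℝ)⌋₊ + 1) n, (j:ℝ)^β
              ≤ Cβ * ((min n ⌊B/(i:ℝ)⌋₊ + 1 : ℕ):ℝ)^(β+1) := hinner
            _ ≤ Cβ * (B/(i:ℝ))^(β+1) := mul_le_mul_of_nonneg_left ht (le_of_lt hCβ)
      _ = (Cβ * B^(β+1)) * ((i:ℝ))⁻¹ := by
          rw [show (i:ℝ)^β * (Cβ * (B/(i:ℝ))^(β+1)) = Cβ * ((i:ℝ)^β * (B/(i:ℝ))^(β+1)) by ring,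
            rpow_div_key (i:ℝ) B β hi0 hB0.le]
          ring
  rw [← Finset.mul_sum] at hstep
  have harm : ∑ i ∈ Icc (a+1) n, ((i:ℝ))⁻¹ ≤ 1 + Real.log ((n:ℝ)^2/B) := by
    have h := harm_ub (a+1) (by omega) n
    have hle : max ((n:ℝ)/((a+1:ℕ):ℝ)) 1 ≤ (n:ℝ)^2/B := by
      rw [max_le_iff]
      constructor
      · have ha1' : B/(n:ℝ) ≤ ((a+1:ℕ):ℝ) := by push_cast; linarith
        have hd0 : (0:ℝ) < B/(n:ℝ) := by positivity
        calc (n:ℝ)/((a+1:ℕ):ℝ) ≤ (n:ℝ)/(B/(n:ℝ)) :=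
              div_le_div_of_nonneg_left hn0.le hd0 ha1'
          _ = (n:ℝ)^2/B := by rw [sq]; field_simp
      · exact hD1
    have := Real.log_le_log (by positivity) hle
    linarith
  calc ∑ i ∈ Icc (a+1) n, (i:ℝ)^β * (∑ j ∈ Icc (min n ⌊B/(i:ℝ)⌋₊ + 1) n, (j:ℝ)^β)
      ≤ (Cβ * B^(β+1)) * ∑ i ∈ Icc (a+1) n, ((i:ℝ))⁻¹ := hstep
    _ ≤ (Cβ * B^(β+1)) * (1 + Real.log ((n:ℝ)^2/B)) := by
        apply mul_le_mul_of_nonneg_left harm (by positivity)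
    _ = Cβ * (B^(β+1) * (1 + Real.log ((n:ℝ)^2/B))) := by ring

lemma upper_reduction {γ m ν : ℝ} (hν : 0 ≤ ν) {n : ℕ} {A B : ℝ} (hA : 0 < A)
    (hBm : B^m = A) (hB0 : 0 < B) :
    ∑ i ∈ Icc 1 n, ∑ j ∈ Icc 1 n, ((i:ℝ)*j)^γ / (((i:ℝ)*j)^m + A)^ν
      ≤ A^(-ν) * ∑ i ∈ Icc 1 n, (i:ℝ)^γ * (∑ j ∈ Icc 1 (min n ⌊B/(i:ℝ)⌋₊), (j:ℝ)^γ)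
        + ∑ i ∈ Icc 1 n, (i:ℝ)^(γ-m*ν) * (∑ j ∈ Icc (min n ⌊B/(i:ℝ)⌋₊ + 1) n, (j:ℝ)^(γ-m*ν)) := by
  have hmain : ∀ i ∈ Icc 1 n, ∑ j ∈ Icc 1 n, ((i:ℝ)*j)^γ / (((i:ℝ)*j)^m + A)^ν
      ≤ A^(-ν) * ((i:ℝ)^γ * (∑ j ∈ Icc 1 (min n ⌊B/(i:ℝ)⌋₊), (j:ℝ)^γ))
        + (i:ℝ)^(γ-m*ν) * (∑ j ∈ Icc (min n ⌊B/(i:ℝ)⌋₊ + 1) n, (j:ℝ)^(γ-m*ν)) := by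
    intro i hi
    obtain ⟨hi1, _⟩ := Finset.mem_Icc.mp hi
    have hi0 : (0:ℝ) < (i:ℝ) := by exact_mod_cast hi1
    rw [icc_split (min n ⌊B/(i:ℝ)⌋₊) n (min_le_left n _)
      (fun j => ((i:ℝ)*j)^γ / (((i:ℝ)*j)^m + A)^ν)]
    have hfirst : ∑ j ∈ Icc 1 (min n ⌊B/(i:ℝ)⌋₊), ((i:ℝ)*j)^γ / (((i:ℝ)*j)^m + A)^ν
        ≤ A^(-ν) * ((i:ℝ)^γ * (∑ j ∈ Icc 1 (min n ⌊B/(i:ℝ)⌋₊), (j:ℝ)^γ)) := by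
      rw [Finset.mul_sum, Finset.mul_sum]
      apply Finset.sum_le_sum
      intro j hj
      obtain ⟨hj1, _⟩ := Finset.mem_Icc.mp hj
      have hj0 : (0:ℝ) < (j:ℝ) := by exact_mod_cast Nat.lt_of_lt_of_le Nat.zero_lt_one hj1
      have hx : (0:ℝ) < (i:ℝ)*(j:ℝ) := by positivity
      calc ((i:ℝ)*j)^γ / (((i:ℝ)*j)^m + A)^ν ≤ ((i:ℝ)*j)^γ * A^(-ν) := term_ub1 hν hA hx
        _ = A^(-ν) * ((i:ℝ)^γ * (j:ℝ)^γ) := by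
            rw [Real.mul_rpow hi0.le hj0.le]; ring
    have hsecond : ∑ j ∈ Icc (min n ⌊B/(i:ℝ)⌋₊ + 1) n, ((i:ℝ)*j)^γ / (((i:ℝ)*j)^m + A)^ν
        ≤ (i:ℝ)^(γ-m*ν) * (∑ j ∈ Icc (min n ⌊B/(i:ℝ)⌋₊ + 1) n, (j:ℝ)^(γ-m*ν)) := by
      rw [Finset.mul_sum]
      apply Finset.sum_le_sum
      intro j hj
      obtain ⟨hj1, _⟩ := Finset.mem_Icc.mp hj
      have hj0 : (0:ℝ) < (j:ℝ) := by
        have : 1 ≤ j := by omega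
        exact_mod_cast this
      have hx : (0:ℝ) < (i:ℝ)*(j:ℝ) := by positivity
      calc ((i:ℝ)*j)^γ / (((i:ℝ)*j)^m + A)^ν ≤ ((i:ℝ)*j)^(γ-m*ν) := term_ub2 hν hA hx
        _ = (i:ℝ)^(γ-m*ν) * (j:ℝ)^(γ-m*ν) := Real.mul_rpow hi0.le hj0.le
    linarith
  calc ∑ i ∈ Icc 1 n, ∑ j ∈ Icc 1 n, ((i:ℝ)*j)^γ / (((i:ℝ)*j)^m + A)^ν
      ≤ ∑ i ∈ Icc 1 n, (A^(-ν) * ((i:ℝ)^γ * (∑ j ∈ Icc 1 (min n ⌊B/(i:ℝ)⌋₊), (j:ℝ)^γ))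
          + (i:ℝ)^(γ-m*ν) * (∑ j ∈ Icc (min n ⌊B/(i:ℝ)⌋₊ + 1) n, (j:ℝ)^(γ-m*ν))) :=
        Finset.sum_le_sum hmain
    _ = A^(-ν) * ∑ i ∈ Icc 1 n, (i:ℝ)^γ * (∑ j ∈ Icc 1 (min n ⌊B/(i:ℝ)⌋₊), (j:ℝ)^γ)
        + ∑ i ∈ Icc 1 n, (i:ℝ)^(γ-m*ν) * (∑ j ∈ Icc (min n ⌊B/(i:ℝ)⌋₊ + 1) n, (j:ℝ)^(γ-m*ν)) := by
        rw [Finset.sum_add_distrib, Finset.mul_sum]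

lemma sqrt_facts {B : ℝ} (hB4 : 4 ≤ B) : 2 ≤ Real.sqrt B ∧ Real.sqrt B * Real.sqrt B = B := by
  constructor
  · have h := Real.sqrt_le_sqrt hB4
    rwa [show (4:ℝ) = 2^2 by norm_num, Real.sqrt_sq (by norm_num : (0:ℝ) ≤ 2)] at h
  · exact Real.mul_self_sqrt (by linarith)

lemma sqrt_rpow_sq {B γ : ℝ} (hB0 : 0 < B) :
    (Real.sqrt B)^(γ+1) * (Real.sqrt B)^(γ+1) = B^(γ+1) := by
  rw [Real.sqrt_eq_rpow]
  rw [← Real.rpow_mul hB0.le]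
  rw [← Real.rpow_add (by positivity)]
  congr 1
  ring

lemma lower_L1 {γ m ν : ℝ} (hγ : -1 < γ) (hν : 0 ≤ ν) (hm : 0 ≤ m) {n : ℕ} {A B : ℝ}
    (hA : 0 < A) (hBm : B^m = A) (hB4 : 4 ≤ B) (hBn2 : B ≤ (n:ℝ)^2) :
    (2:ℝ)^(-ν) * ((4:ℝ)^(-(max γ 0) - 1))^2 * (B^(γ+1) * A^(-ν))
      ≤ ∑ i ∈ Icc 1 n, ∑ j ∈ Icc 1 n, ((i:ℝ)*j)^γ / (((i:ℝ)*j)^m + A)^ν := by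
  have hB0 : (0:ℝ) < B := by linarith
  obtain ⟨hsB2, hsBsq⟩ := sqrt_facts hB4
  set sB := Real.sqrt B with hsBdef
  have hsB0 : (0:ℝ) < sB := by linarith
  have hsBn : sB ≤ (n:ℝ) := by
    have h := Real.sqrt_le_sqrt hBn2
    rwa [Real.sqrt_sq (Nat.cast_nonneg n)] at h
  set s₁ := ⌊sB⌋₊ with hs₁def
  have hs₁sB : (s₁:ℝ) ≤ sB := Nat.floor_le hsB0.le
  have hs₁n : s₁ ≤ n := by
    have := Nat.floor_mono hsBn
    rwa [Nat.floor_natCast] at this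
  -- pointwise lower bound on Icc 1 s₁ × Icc 1 s₁
  have hpt : ∀ i ∈ Icc 1 s₁, ∀ j ∈ Icc 1 s₁,
      (2:ℝ)^(-ν) * A^(-ν) * ((i:ℝ)^γ * (j:ℝ)^γ)
        ≤ ((i:ℝ)*j)^γ / (((i:ℝ)*j)^m + A)^ν := by
    intro i hi j hj
    obtain ⟨hi1, hi2⟩ := Finset.mem_Icc.mp hi
    obtain ⟨hj1, hj2⟩ := Finset.mem_Icc.mp hj
    have hi0 : (0:ℝ) < (i:ℝ) := by exact_mod_cast hi1
    have hj0 : (0:ℝ) < (j:ℝ) := by exact_mod_cast hj1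
    have hx : (0:ℝ) < (i:ℝ)*(j:ℝ) := by positivity
    have hisB : (i:ℝ) ≤ sB := le_trans (by exact_mod_cast hi2) hs₁sB
    have hjsB : (j:ℝ) ≤ sB := le_trans (by exact_mod_cast hj2) hs₁sB
    have hxB : (i:ℝ)*(j:ℝ) ≤ B := by
      calc (i:ℝ)*(j:ℝ) ≤ sB * sB := by
            apply mul_le_mul hisB hjsB hj0.le hsB0.le
        _ = B := hsBsq
    have hxm : ((i:ℝ)*(j:ℝ))^m ≤ A := by
      rw [← hBm]
      exact Real.rpow_le_rpow hx.le hxB hm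
    have hterm := term_lb (γ := γ) hν hA hx hxm
    calc (2:ℝ)^(-ν) * A^(-ν) * ((i:ℝ)^γ * (j:ℝ)^γ)
        = (2:ℝ)^(-ν) * (((i:ℝ)*j)^γ * A^(-ν)) := by
          rw [Real.mul_rpow hi0.le hj0.le]; ring
      _ ≤ ((i:ℝ)*j)^γ / (((i:ℝ)*j)^m + A)^ν := hterm
  -- sum of products equals product of sums
  have hsub : ∑ i ∈ Icc 1 s₁, ∑ j ∈ Icc 1 s₁,
      (2:ℝ)^(-ν) * A^(-ν) * ((i:ℝ)^γ * (j:ℝ)^γ)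
      ≤ ∑ i ∈ Icc 1 n, ∑ j ∈ Icc 1 n, ((i:ℝ)*j)^γ / (((i:ℝ)*j)^m + A)^ν := by
    calc ∑ i ∈ Icc 1 s₁, ∑ j ∈ Icc 1 s₁, (2:ℝ)^(-ν) * A^(-ν) * ((i:ℝ)^γ * (j:ℝ)^γ)
        ≤ ∑ i ∈ Icc 1 s₁, ∑ j ∈ Icc 1 s₁, ((i:ℝ)*j)^γ / (((i:ℝ)*j)^m + A)^ν := by
          apply Finset.sum_le_sum
          intro i hi
          exact Finset.sum_le_sum (hpt i hi)
      _ ≤ ∑ i ∈ Icc 1 s₁, ∑ j ∈ Icc 1 n, ((i:ℝ)*j)^γ / (((i:ℝ)*j)^m + A)^ν := by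
          apply Finset.sum_le_sum
          intro i _
          apply Finset.sum_le_sum_of_subset_of_nonneg (Finset.Icc_subset_Icc_right hs₁n)
          intro j _ _
          exact term_nonneg hA.le (by positivity)
      _ ≤ ∑ i ∈ Icc 1 n, ∑ j ∈ Icc 1 n, ((i:ℝ)*j)^γ / (((i:ℝ)*j)^m + A)^ν := by
          apply Finset.sum_le_sum_of_subset_of_nonneg (Finset.Icc_subset_Icc_right hs₁n)
          intro i _ _
          apply Finset.sum_nonneg
          intro j _
          exact term_nonneg hA.le (by positivity)
  have hprod : ∑ i ∈ Icc 1 s₁, ∑ j ∈ Icc 1 s₁, (2:ℝ)^(-ν) * A^(-ν) * ((i:ℝ)^γ * (j:ℝ)^γ)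
      = (2:ℝ)^(-ν) * A^(-ν) * ((∑ i ∈ Icc 1 s₁, (i:ℝ)^γ) * (∑ j ∈ Icc 1 s₁, (j:ℝ)^γ)) := by
    rw [Finset.sum_mul_sum]
    rw [Finset.mul_sum]
    apply Finset.sum_congr rfl
    intro i _
    rw [Finset.mul_sum]
  have hpow : (4:ℝ)^(-(max γ 0) - 1) * sB^(γ+1) ≤ ∑ i ∈ Icc 1 s₁, (i:ℝ)^γ :=
    pow_sum_lb γ sB hsB2
  have hpow0 : (0:ℝ) < (4:ℝ)^(-(max γ 0) - 1) * sB^(γ+1) := by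
    have h1 : (0:ℝ) < (4:ℝ)^(-(max γ 0) - 1) := Real.rpow_pos_of_pos (by norm_num) _
    have h2 : (0:ℝ) < sB^(γ+1) := Real.rpow_pos_of_pos hsB0 _
    positivity
  have h2ν : (0:ℝ) < (2:ℝ)^(-ν) * A^(-ν) := by
    have := Real.rpow_pos_of_pos (show (0:ℝ) < 2 by norm_num) (-ν)
    have := Real.rpow_pos_of_pos hA (-ν)
    positivity
  have hkey : (2:ℝ)^(-ν) * ((4:ℝ)^(-(max γ 0) - 1))^2 * (B^(γ+1) * A^(-ν))
      = (2:ℝ)^(-ν) * A^(-ν) * (((4:ℝ)^(-(max γ 0) - 1) * sB^(γ+1))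
        * ((4:ℝ)^(-(max γ 0) - 1) * sB^(γ+1))) := by
    rw [show ((4:ℝ)^(-(max γ 0) - 1) * sB^(γ+1)) * ((4:ℝ)^(-(max γ 0) - 1) * sB^(γ+1))
        = ((4:ℝ)^(-(max γ 0) - 1))^2 * (sB^(γ+1) * sB^(γ+1)) by ring, sqrt_rpow_sq hB0]
    ring
  rw [hkey]
  calc (2:ℝ)^(-ν) * A^(-ν) * (((4:ℝ)^(-(max γ 0) - 1) * sB^(γ+1))
        * ((4:ℝ)^(-(max γ 0) - 1) * sB^(γ+1)))
      ≤ (2:ℝ)^(-ν) * A^(-ν) * ((∑ i ∈ Icc 1 s₁, (i:ℝ)^γ) * (∑ j ∈ Icc 1 s₁, (j:ℝ)^γ)) := by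
        apply mul_le_mul_of_nonneg_left _ h2ν.le
        apply mul_le_mul hpow hpow hpow0.le
        exact le_trans hpow0.le hpow
    _ = ∑ i ∈ Icc 1 s₁, ∑ j ∈ Icc 1 s₁, (2:ℝ)^(-ν) * A^(-ν) * ((i:ℝ)^γ * (j:ℝ)^γ) := hprod.symm
    _ ≤ ∑ i ∈ Icc 1 n, ∑ j ∈ Icc 1 n, ((i:ℝ)*j)^γ / (((i:ℝ)*j)^m + A)^ν := hsub

lemma lower_core {γ m ν : ℝ} (hν : 0 ≤ ν) (hm : 0 ≤ m) {n : ℕ} {A B : ℝ} (hA : 0 < A)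
    (hBm : B^m = A) (hB0 : 0 < B) {a b : ℕ} (ha : 1 ≤ a) (hb : b ≤ n)
    (hcond : ∀ i : ℕ, a ≤ i → i ≤ b → 2 ≤ B/(i:ℝ) ∧ ⌊B/(i:ℝ)⌋₊ ≤ n) :
    (2:ℝ)^(-ν) * (4:ℝ)^(-(max γ 0) - 1) * (B^(γ+1) * A^(-ν)) * (∑ i ∈ Icc a b, ((i:ℝ))⁻¹)
      ≤ ∑ i ∈ Icc 1 n, ∑ j ∈ Icc 1 n, ((i:ℝ)*j)^γ / (((i:ℝ)*j)^m + A)^ν := by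
  have hAneg : (0:ℝ) < A^(-ν) := Real.rpow_pos_of_pos hA _
  have h2ν : (0:ℝ) < (2:ℝ)^(-ν) := Real.rpow_pos_of_pos (by norm_num) _
  have hcγ : (0:ℝ) < (4:ℝ)^(-(max γ 0) - 1) := Real.rpow_pos_of_pos (by norm_num) _
  have hBp : (0:ℝ) < B^(γ+1) := Real.rpow_pos_of_pos hB0 _
  -- per-i inner lower bound
  have hinner : ∀ i ∈ Icc a b,
      ((2:ℝ)^(-ν) * (4:ℝ)^(-(max γ 0) - 1) * (B^(γ+1) * A^(-ν))) * ((i:ℝ))⁻¹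
        ≤ ∑ j ∈ Icc 1 n, ((i:ℝ)*j)^γ / (((i:ℝ)*j)^m + A)^ν := by
    intro i hi
    obtain ⟨h1, h2⟩ := Finset.mem_Icc.mp hi
    have hi1 : 1 ≤ i := le_trans ha h1
    have hi0 : (0:ℝ) < (i:ℝ) := by exact_mod_cast hi1
    obtain ⟨hdiv2, hfln⟩ := hcond i h1 h2
    have hdiv0 : (0:ℝ) < B/(i:ℝ) := by linarith
    -- restrict inner sum
    have hsub : ∑ j ∈ Icc 1 ⌊B/(i:ℝ)⌋₊, ((i:ℝ)*j)^γ / (((i:ℝ)*j)^m + A)^ν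
        ≤ ∑ j ∈ Icc 1 n, ((i:ℝ)*j)^γ / (((i:ℝ)*j)^m + A)^ν := by
      apply Finset.sum_le_sum_of_subset_of_nonneg (Finset.Icc_subset_Icc_right hfln)
      intro j _ _
      exact term_nonneg hA.le (by positivity)
    -- pointwise bound on restricted sum
    have hpt : ∀ j ∈ Icc 1 ⌊B/(i:ℝ)⌋₊,
        ((2:ℝ)^(-ν) * A^(-ν) * (i:ℝ)^γ) * (j:ℝ)^γ
          ≤ ((i:ℝ)*j)^γ / (((i:ℝ)*j)^m + A)^ν := by
      intro j hj
      obtain ⟨hj1, hj2⟩ := Finset.mem_Icc.mp hj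
      have hj0 : (0:ℝ) < (j:ℝ) := by exact_mod_cast hj1
      have hx : (0:ℝ) < (i:ℝ)*(j:ℝ) := by positivity
      have hjB : (j:ℝ) ≤ B/(i:ℝ) := by
        calc (j:ℝ) ≤ (⌊B/(i:ℝ)⌋₊:ℝ) := by exact_mod_cast hj2
          _ ≤ B/(i:ℝ) := Nat.floor_le hdiv0.le
      have hxB : (i:ℝ)*(j:ℝ) ≤ B := by
        have := mul_le_mul_of_nonneg_left hjB hi0.le
        rwa [mul_div_cancel₀ B (ne_of_gt hi0)] at this
      have hxm : ((i:ℝ)*(j:ℝ))^m ≤ A := by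
        rw [← hBm]
        exact Real.rpow_le_rpow hx.le hxB hm
      have hterm := term_lb (γ := γ) hν hA hx hxm
      calc ((2:ℝ)^(-ν) * A^(-ν) * (i:ℝ)^γ) * (j:ℝ)^γ
          = (2:ℝ)^(-ν) * (((i:ℝ)*j)^γ * A^(-ν)) := by
            rw [Real.mul_rpow hi0.le hj0.le]; ring
        _ ≤ ((i:ℝ)*j)^γ / (((i:ℝ)*j)^m + A)^ν := hterm
    have hsum1 : ((2:ℝ)^(-ν) * A^(-ν) * (i:ℝ)^γ) * (∑ j ∈ Icc 1 ⌊B/(i:ℝ)⌋₊, (j:ℝ)^γ)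
        ≤ ∑ j ∈ Icc 1 ⌊B/(i:ℝ)⌋₊, ((i:ℝ)*j)^γ / (((i:ℝ)*j)^m + A)^ν := by
      rw [Finset.mul_sum]
      exact Finset.sum_le_sum hpt
    have hpow : (4:ℝ)^(-(max γ 0) - 1) * (B/(i:ℝ))^(γ+1) ≤ ∑ j ∈ Icc 1 ⌊B/(i:ℝ)⌋₊, (j:ℝ)^γ :=
      pow_sum_lb γ (B/(i:ℝ)) hdiv2
    have hiγ : (0:ℝ) < (i:ℝ)^γ := Real.rpow_pos_of_pos hi0 _
    calc ((2:ℝ)^(-ν) * (4:ℝ)^(-(max γ 0) - 1) * (B^(γ+1) * A^(-ν))) * ((i:ℝ))⁻¹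
        = ((2:ℝ)^(-ν) * A^(-ν) * (i:ℝ)^γ) * ((4:ℝ)^(-(max γ 0) - 1) * (B/(i:ℝ))^(γ+1)) := by
          rw [show ((2:ℝ)^(-ν) * A^(-ν) * (i:ℝ)^γ) * ((4:ℝ)^(-(max γ 0) - 1) * (B/(i:ℝ))^(γ+1))
            = ((2:ℝ)^(-ν) * A^(-ν) * (4:ℝ)^(-(max γ 0) - 1)) * ((i:ℝ)^γ * (B/(i:ℝ))^(γ+1)) by ring,
            rpow_div_key (i:ℝ) B γ hi0 hB0.le]
          ring
      _ ≤ ((2:ℝ)^(-ν) * A^(-ν) * (i:ℝ)^γ) * (∑ j ∈ Icc 1 ⌊B/(i:ℝ)⌋₊, (j:ℝ)^γ) := by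
          apply mul_le_mul_of_nonneg_left hpow (by positivity)
      _ ≤ ∑ j ∈ Icc 1 ⌊B/(i:ℝ)⌋₊, ((i:ℝ)*j)^γ / (((i:ℝ)*j)^m + A)^ν := hsum1
      _ ≤ ∑ j ∈ Icc 1 n, ((i:ℝ)*j)^γ / (((i:ℝ)*j)^m + A)^ν := hsub
  -- now sum over i
  have houter : ∑ i ∈ Icc a b, ∑ j ∈ Icc 1 n, ((i:ℝ)*j)^γ / (((i:ℝ)*j)^m + A)^ν
      ≤ ∑ i ∈ Icc 1 n, ∑ j ∈ Icc 1 n, ((i:ℝ)*j)^γ / (((i:ℝ)*j)^m + A)^ν := by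
    apply Finset.sum_le_sum_of_subset_of_nonneg
    · exact Finset.Icc_subset_Icc ha hb
    · intro i _ _
      apply Finset.sum_nonneg
      intro j _
      exact term_nonneg hA.le (by positivity)
  calc (2:ℝ)^(-ν) * (4:ℝ)^(-(max γ 0) - 1) * (B^(γ+1) * A^(-ν)) * (∑ i ∈ Icc a b, ((i:ℝ))⁻¹)
      = ∑ i ∈ Icc a b, ((2:ℝ)^(-ν) * (4:ℝ)^(-(max γ 0) - 1) * (B^(γ+1) * A^(-ν))) * ((i:ℝ))⁻¹ := by
        rw [← Finset.mul_sum]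
    _ ≤ ∑ i ∈ Icc a b, ∑ j ∈ Icc 1 n, ((i:ℝ)*j)^γ / (((i:ℝ)*j)^m + A)^ν :=
        Finset.sum_le_sum hinner
    _ ≤ ∑ i ∈ Icc 1 n, ∑ j ∈ Icc 1 n, ((i:ℝ)*j)^γ / (((i:ℝ)*j)^m + A)^ν := houter

lemma lower_L2A {γ m ν : ℝ} (hν : 0 ≤ ν) (hm : 0 ≤ m) {n : ℕ} {A B : ℝ}
    (hA : 0 < A) (hBm : B^m = A) (hB4 : 4 ≤ B) (hBn : B ≤ (n:ℝ)) :
    (2:ℝ)^(-ν) * (4:ℝ)^(-(max γ 0) - 1) * (B^(γ+1) * A^(-ν)) * (Real.log B / 2)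
      ≤ ∑ i ∈ Icc 1 n, ∑ j ∈ Icc 1 n, ((i:ℝ)*j)^γ / (((i:ℝ)*j)^m + A)^ν := by
  have hB0 : (0:ℝ) < B := by linarith
  obtain ⟨hsB2, hsBsq⟩ := sqrt_facts hB4
  set sB := Real.sqrt B with hsBdef
  have hsB0 : (0:ℝ) < sB := by linarith
  have hsBn : sB ≤ (n:ℝ) := by
    calc sB ≤ B := by nlinarith
      _ ≤ (n:ℝ) := hBn
  set s₁ := ⌊sB⌋₊ with hs₁def
  have hs₁sB : (s₁:ℝ) ≤ sB := Nat.floor_le hsB0.le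
  have hs₁n : s₁ ≤ n := by
    have := Nat.floor_mono hsBn
    rwa [Nat.floor_natCast] at this
  have hcond : ∀ i : ℕ, 1 ≤ i → i ≤ s₁ → 2 ≤ B/(i:ℝ) ∧ ⌊B/(i:ℝ)⌋₊ ≤ n := by
    intro i h1 h2
    have hi0 : (0:ℝ) < (i:ℝ) := by exact_mod_cast h1
    have hisB : (i:ℝ) ≤ sB := le_trans (by exact_mod_cast h2) hs₁sB
    constructor
    · have hd : B/sB ≤ B/(i:ℝ) := div_le_div_of_nonneg_left hB0.le hi0 hisB
      rw [Real.div_sqrt] at hd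
      linarith
    · have hd : B/(i:ℝ) ≤ (n:ℝ) := by
        calc B/(i:ℝ) ≤ B/1 := div_le_div_of_nonneg_left hB0.le (by norm_num) (by exact_mod_cast h1)
          _ = B := div_one B
          _ ≤ (n:ℝ) := hBn
      have := Nat.floor_mono hd
      rwa [Nat.floor_natCast] at this
  have hcore := lower_core (γ := γ) hν hm hA hBm hB0 (le_refl 1) hs₁n hcond
  have hharm : Real.log B / 2 ≤ ∑ i ∈ Icc 1 s₁, ((i:ℝ))⁻¹ := by
    have h := harm_lb 1 le_rfl s₁
    have hsB_le : sB ≤ ((s₁:ℝ)+1)/((1:ℕ):ℝ) := by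
      rw [Nat.cast_one, div_one]
      exact le_of_lt (Nat.lt_floor_add_one sB)
    have hlog : Real.log sB ≤ Real.log (((s₁:ℝ)+1)/((1:ℕ):ℝ)) :=
      Real.log_le_log hsB0 hsB_le
    have hls : Real.log sB = Real.log B / 2 := by
      rw [hsBdef, Real.log_sqrt hB0.le]
    linarith
  have hc0 : (0:ℝ) < (2:ℝ)^(-ν) * (4:ℝ)^(-(max γ 0) - 1) * (B^(γ+1) * A^(-ν)) := by
    have h1 := Real.rpow_pos_of_pos (show (0:ℝ) < 2 by norm_num) (-ν)
    have h2 := Real.rpow_pos_of_pos (show (0:ℝ) < 4 by norm_num) (-(max γ 0) - 1)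
    have h3 := Real.rpow_pos_of_pos hB0 (γ+1)
    have h4 := Real.rpow_pos_of_pos hA (-ν)
    positivity
  calc (2:ℝ)^(-ν) * (4:ℝ)^(-(max γ 0) - 1) * (B^(γ+1) * A^(-ν)) * (Real.log B / 2)
      ≤ (2:ℝ)^(-ν) * (4:ℝ)^(-(max γ 0) - 1) * (B^(γ+1) * A^(-ν)) * (∑ i ∈ Icc 1 s₁, ((i:ℝ))⁻¹) :=
        mul_le_mul_of_nonneg_left hharm hc0.le
    _ ≤ ∑ i ∈ Icc 1 n, ∑ j ∈ Icc 1 n, ((i:ℝ)*j)^γ / (((i:ℝ)*j)^m + A)^ν := hcore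

lemma lower_L2B {γ m ν : ℝ} (hν : 0 ≤ ν) (hm : 0 ≤ m) {n : ℕ} {A B : ℝ}
    (hA : 0 < A) (hBm : B^m = A) (hB4 : 4 ≤ B) (hnB : (n:ℝ) ≤ B) (hBn2 : B ≤ (n:ℝ)^2)
    (hn : 1 ≤ n) :
    (2:ℝ)^(-ν) * (4:ℝ)^(-(max γ 0) - 1) * (B^(γ+1) * A^(-ν)) * Real.log ((n:ℝ)^2/B/4)
      ≤ ∑ i ∈ Icc 1 n, ∑ j ∈ Icc 1 n, ((i:ℝ)*j)^γ / (((i:ℝ)*j)^m + A)^ν := by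
  have hB0 : (0:ℝ) < B := by linarith
  have hn0 : (0:ℝ) < (n:ℝ) := by exact_mod_cast hn
  set a := ⌊B/(n:ℝ)⌋₊ + 1 with hadef
  set b := min n ⌊B/2⌋₊ with hbdef
  have hbn : b ≤ n := min_le_left _ _
  have haBn : B/(n:ℝ) < (a:ℝ) := by
    rw [hadef]
    push_cast
    exact Nat.lt_floor_add_one _
  have haub : (a:ℝ) ≤ 2*B/(n:ℝ) := by
    have h1 : (⌊B/(n:ℝ)⌋₊:ℝ) ≤ B/(n:ℝ) := Nat.floor_le (by positivity)
    have h2 : (1:ℝ) ≤ B/(n:ℝ) := by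
      rw [le_div_iff₀ hn0]; linarith
    rw [hadef]
    push_cast
    rw [show 2*B/(n:ℝ) = B/(n:ℝ) + B/(n:ℝ) by ring]
    linarith
  have ha0 : (0:ℝ) < (a:ℝ) := by
    rw [hadef]; push_cast; positivity
  have hcond : ∀ i : ℕ, a ≤ i → i ≤ b → 2 ≤ B/(i:ℝ) ∧ ⌊B/(i:ℝ)⌋₊ ≤ n := by
    intro i h1 h2
    have hi1 : 1 ≤ i := le_trans (by omega) h1
    have hi0 : (0:ℝ) < (i:ℝ) := by exact_mod_cast hi1
    have hia : (a:ℝ) ≤ (i:ℝ) := by exact_mod_cast h1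
    have hiB2 : (i:ℝ) ≤ B/2 := by
      have h3 : i ≤ ⌊B/2⌋₊ := le_trans h2 (min_le_right _ _)
      calc (i:ℝ) ≤ (⌊B/2⌋₊:ℝ) := by exact_mod_cast h3
        _ ≤ B/2 := Nat.floor_le (by positivity)
    constructor
    · rw [le_div_iff₀ hi0]; linarith
    · have hBi : B/(i:ℝ) < (n:ℝ) := by
        rw [div_lt_iff₀ hi0]
        have := haBn.trans_le hia
        rw [div_lt_iff₀ hn0] at this
        nlinarith
      exact le_of_lt ((Nat.floor_lt (by positivity)).mpr hBi)
  have hcore := lower_core (γ := γ) hν hm hA hBm hB0 (by omega : 1 ≤ a) hbn hcond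
  have hharm : Real.log ((n:ℝ)^2/B/4) ≤ ∑ i ∈ Icc a b, ((i:ℝ))⁻¹ := by
    have h := harm_lb a (by omega) b
    have hratio : (n:ℝ)^2/B/4 ≤ ((b:ℝ)+1)/(a:ℝ) := by
      rcases le_total n ⌊B/2⌋₊ with hc | hc
      · have hbeq : b = n := min_eq_left hc
        have hnum : (n:ℝ) ≤ (b:ℝ)+1 := by rw [hbeq]; linarith
        have hd0 : (0:ℝ) < 2*B/(n:ℝ) := by positivity
        calc (n:ℝ)^2/B/4 ≤ (n:ℝ)^2/(2*B) := by
              rw [div_div]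
              apply div_le_div_of_nonneg_left (by positivity) (by positivity) (by linarith)
          _ = (n:ℝ)/(2*B/(n:ℝ)) := by field_simp
          _ ≤ ((b:ℝ)+1)/(a:ℝ) := by
              apply div_le_div₀ (by positivity) _ ha0 haub
              rw [hbeq]; linarith
      · have hbeq : b = ⌊B/2⌋₊ := min_eq_right hc
        have hnum : B/2 ≤ (b:ℝ)+1 := by
          rw [hbeq]
          exact le_of_lt (Nat.lt_floor_add_one _)
        calc (n:ℝ)^2/B/4 ≤ (n:ℝ)/4 := by
              apply div_le_div_of_nonneg_right _ (by norm_num)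
              rw [div_le_iff₀ hB0]
              nlinarith
          _ = (B/2)/(2*B/(n:ℝ)) := by field_simp; ring
          _ ≤ ((b:ℝ)+1)/(a:ℝ) := div_le_div₀ (by positivity) hnum ha0 haub
    have hlog := Real.log_le_log (by positivity) hratio
    have hlog2 : Real.log (((b:ℝ)+1)/(a:ℝ)) ≤ ∑ i ∈ Icc a b, ((i:ℝ))⁻¹ := h
    linarith
  have hc0 : (0:ℝ) < (2:ℝ)^(-ν) * (4:ℝ)^(-(max γ 0) - 1) * (B^(γ+1) * A^(-ν)) := by
    have h1 := Real.rpow_pos_of_pos (show (0:ℝ) < 2 by norm_num) (-ν)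
    have h2 := Real.rpow_pos_of_pos (show (0:ℝ) < 4 by norm_num) (-(max γ 0) - 1)
    have h3 := Real.rpow_pos_of_pos hB0 (γ+1)
    have h4 := Real.rpow_pos_of_pos hA (-ν)
    positivity
  calc (2:ℝ)^(-ν) * (4:ℝ)^(-(max γ 0) - 1) * (B^(γ+1) * A^(-ν)) * Real.log ((n:ℝ)^2/B/4)
      ≤ (2:ℝ)^(-ν) * (4:ℝ)^(-(max γ 0) - 1) * (B^(γ+1) * A^(-ν)) * (∑ i ∈ Icc a b, ((i:ℝ))⁻¹) :=
        mul_le_mul_of_nonneg_left hharm hc0.le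
    _ ≤ ∑ i ∈ Icc 1 n, ∑ j ∈ Icc 1 n, ((i:ℝ)*j)^γ / (((i:ℝ)*j)^m + A)^ν := hcore

set_option maxHeartbeats 2000000

/-- Tensor-product double sum comparison: for `γ > -1`, `m ≥ 1`, `γ - mν < -1`
and any `l_n → ∞`, the double sum `Σ_i Σ_j (ij)^γ/((ij)^m + cn²)^ν` is of exact
order `(cn²)^{γ/m - ν + 1/m}(1 + log(cn²))` when `cn² ≤ n^m`, and of order
`(cn²)^{γ/m - ν + 1/m}(1 + log(n^{2m}/(cn²)))` when `cn² ≥ n^m`, uniformly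
for `c ∈ [l_n/n², n^{2m-2}]`, for large `n`. -/
theorem double_sum_tensor_comparison
    (γ m ν : ℝ) (hγ : -1 < γ) (hm : 1 ≤ m) (hν : γ - m * ν < -1)
    (l : ℕ → ℝ) (hl : Filter.Tendsto l Filter.atTop Filter.atTop) :
    ∃ k K : ℝ, 0 < k ∧ k ≤ K ∧ ∃ N : ℕ, ∀ n : ℕ, N ≤ n → ∀ c : ℝ,
      l n / (n : ℝ) ^ 2 ≤ c → c ≤ (n : ℝ) ^ (2 * m - 2) →
      (k * ((c * (n : ℝ) ^ 2) ^ (γ / m - ν + 1 / m) *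
          (if c * (n : ℝ) ^ 2 ≤ (n : ℝ) ^ m then 1 + Real.log (c * (n : ℝ) ^ 2)
           else 1 + Real.log ((n : ℝ) ^ (2 * m) / (c * (n : ℝ) ^ 2)))) ≤
        (∑ i ∈ Finset.Icc 1 n, ∑ j ∈ Finset.Icc 1 n,
          ((i : ℝ) * j) ^ γ / (((i : ℝ) * j) ^ m + c * (n : ℝ) ^ 2) ^ ν)) ∧
      ((∑ i ∈ Finset.Icc 1 n, ∑ j ∈ Finset.Icc 1 n,
          ((i : ℝ) * j) ^ γ / (((i : ℝ) * j) ^ m + c * (n : ℝ) ^ 2) ^ ν) ≤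
        K * ((c * (n : ℝ) ^ 2) ^ (γ / m - ν + 1 / m) *
          (if c * (n : ℝ) ^ 2 ≤ (n : ℝ) ^ m then 1 + Real.log (c * (n : ℝ) ^ 2)
           else 1 + Real.log ((n : ℝ) ^ (2 * m) / (c * (n : ℝ) ^ 2))))) := by
  have hm0 : (0:ℝ) < m := by linarith
  have hm' : m ≠ 0 := ne_of_gt hm0
  have hγ1 : (0:ℝ) < γ + 1 := by linarith
  have hν0 : (0:ℝ) < ν := by
    by_contra h
    push_neg at h
    nlinarith
  have hβ : γ - m*ν < -1 := hν
  have hβ1 : γ - m*ν + 1 < 0 := by linarith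
  -- constants
  set Cγ := 1 + 1/(γ+1) with hCγdef
  set Cβ := 1 + 1/(-((γ - m*ν)+1)) with hCβdef
  set cγ := (4:ℝ)^(-(max γ 0) - 1) with hcγdef
  have hCγ0 : (0:ℝ) < Cγ := by rw [hCγdef]; positivity
  have hCβ0 : (0:ℝ) < Cβ := by
    rw [hCβdef]
    have : (0:ℝ) < -((γ - m*ν)+1) := by linarith
    positivity
  have hcγ0 : (0:ℝ) < cγ := Real.rpow_pos_of_pos (by norm_num) _
  set k1 := (2:ℝ)^(-ν) * cγ^2 with hk1def
  set k2 := (2:ℝ)^(-ν) * cγ with hk2def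
  have h2ν0 : (0:ℝ) < (2:ℝ)^(-ν) := Real.rpow_pos_of_pos (by norm_num) _
  have hk10 : (0:ℝ) < k1 := by rw [hk1def]; positivity
  have hk20 : (0:ℝ) < k2 := by rw [hk2def]; positivity
  have hlog16 : (1:ℝ) ≤ Real.log 16 := by
    rw [Real.le_log_iff_exp_le (by norm_num)]
    calc Real.exp 1 ≤ 2.7182818286 := (Real.exp_one_lt_d9).le
      _ ≤ 16 := by norm_num
  set K0 := (Cγ + Cγ^2) + (Cβ + Cβ^2) with hK0def
  have hK00 : (0:ℝ) < K0 := by rw [hK0def]; positivity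
  set k := min (min (k1/2) (k2/(4*m))) (min (k1/(1 + m*Real.log 16)) (k2/(2*(1+m)))) with hkdef
  have hk0 : (0:ℝ) < k := by
    rw [hkdef]
    have h1 : (0:ℝ) < 1 + m*Real.log 16 := by nlinarith
    have h2 : (0:ℝ) < 2*(1+m) := by linarith
    have h3 : (0:ℝ) < 4*m := by linarith
    simp only [lt_min_iff]
    refine ⟨⟨by positivity, by positivity⟩, by positivity, by positivity⟩
  refine ⟨k, max K0 k, hk0, le_max_right _ _, ?_⟩
  obtain ⟨N₁, hN₁⟩ := Filter.eventually_atTop.mp (Filter.tendsto_atTop.mp hl ((4:ℝ)^m))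
  refine ⟨max N₁ 1, ?_⟩
  intro n hn c hc1 hc2
  have hn1 : 1 ≤ n := le_trans (le_max_right _ _) hn
  have hnR : (1:ℝ) ≤ (n:ℝ) := by exact_mod_cast hn1
  have hn0 : (0:ℝ) < (n:ℝ) := by linarith
  have hn2pos : (0:ℝ) < (n:ℝ)^2 := by positivity
  have hlA : (4:ℝ)^m ≤ l n := hN₁ n (le_trans (le_max_left _ _) hn)
  set A := c * (n:ℝ)^2 with hAdef
  have h4m0 : (0:ℝ) < (4:ℝ)^m := Real.rpow_pos_of_pos (by norm_num) m
  have hA4 : (4:ℝ)^m ≤ A := by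
    rw [div_le_iff₀ hn2pos] at hc1
    calc (4:ℝ)^m ≤ l n := hlA
      _ ≤ c * (n:ℝ)^2 := hc1
  have hA0 : (0:ℝ) < A := lt_of_lt_of_le h4m0 hA4
  have hnsq_rpow : (n:ℝ)^2 = (n:ℝ)^((2:ℝ)) := by
    rw [show ((2:ℝ)) = ((2:ℕ):ℝ) by norm_num, Real.rpow_natCast]
  have hAn2m : A ≤ (n:ℝ)^(2*m) := by
    calc A = c * (n:ℝ)^2 := hAdef
      _ ≤ (n:ℝ)^(2*m-2) * (n:ℝ)^2 := mul_le_mul_of_nonneg_right hc2 (by positivity)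
      _ = (n:ℝ)^(2*m) := by
          rw [hnsq_rpow, ← Real.rpow_add hn0]
          ring_nf
  set B := A^(1/m) with hBdef
  have hB0 : (0:ℝ) < B := Real.rpow_pos_of_pos hA0 _
  have hBm : B^m = A := by
    rw [hBdef, ← Real.rpow_mul hA0.le, one_div_mul_cancel hm', Real.rpow_one]
  have hB4 : (4:ℝ) ≤ B := by
    have h := Real.rpow_le_rpow h4m0.le hA4 (by positivity : (0:ℝ) ≤ 1/m)
    rwa [← Real.rpow_mul (by norm_num : (0:ℝ) ≤ 4), mul_one_div_cancel hm', Real.rpow_one] at h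
  have hBn2 : B ≤ (n:ℝ)^2 := by
    have h := Real.rpow_le_rpow hA0.le hAn2m (by positivity : (0:ℝ) ≤ 1/m)
    rw [← Real.rpow_mul hn0.le] at h
    rw [show (2*m)*(1/m) = 2 by field_simp] at h
    rwa [← hnsq_rpow] at h
  have hAB : A^(-ν) = B^(m * -ν) := by
    rw [← hBm, ← Real.rpow_mul hB0.le]
  have hBA : B^(γ+1) * A^(-ν) = B^((γ-m*ν)+1) := by
    rw [hAB, ← Real.rpow_add hB0]
    congr 1
    ring
  have hApow : A ^ (γ/m - ν + 1/m) = B^((γ-m*ν)+1) := by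
    rw [hBdef, ← Real.rpow_mul hA0.le]
    congr 1
    field_simp
  have hiff : (A ≤ (n:ℝ)^m) ↔ (B ≤ (n:ℝ)) := by
    constructor
    · intro h
      have h2 := Real.rpow_le_rpow hA0.le h (by positivity : (0:ℝ) ≤ 1/m)
      rwa [← Real.rpow_mul hn0.le, mul_one_div_cancel hm', Real.rpow_one] at h2
    · intro h
      rw [← hBm]
      exact Real.rpow_le_rpow hB0.le h hm0.le
  set S := ∑ i ∈ Icc 1 n, ∑ j ∈ Icc 1 n, ((i:ℝ)*j)^γ / (((i:ℝ)*j)^m + A)^ν with hSdef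
  -- the two generic lower bounds
  have hL1 : k1 * B^((γ-m*ν)+1) ≤ S := by
    have h := lower_L1 (γ := γ) (m := m) (ν := ν) hγ hν0.le hm0.le hA0 hBm hB4 hBn2
    rw [hBA] at h
    calc k1 * B^((γ-m*ν)+1) = (2:ℝ)^(-ν) * cγ^2 * B^((γ-m*ν)+1) := by rw [hk1def]
      _ ≤ S := h
  by_cases hcase : A ≤ (n:ℝ)^m
  · -- case A ≤ n^m, i.e. B ≤ n
    have hBn : B ≤ (n:ℝ) := hiff.mp hcase
    rw [if_pos hcase]
    have hlogA : Real.log A = m * Real.log B := by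
      rw [← hBm, Real.log_rpow hB0]
    have hlogB : (0:ℝ) ≤ Real.log B := Real.log_nonneg (by linarith)
    have hBp : (0:ℝ) < B^((γ-m*ν)+1) := Real.rpow_pos_of_pos hB0 _
    have hAν : (0:ℝ) < A^(-ν) := Real.rpow_pos_of_pos hA0 _
    constructor
    · -- lower bound
      have hL2 : k2 * B^((γ-m*ν)+1) * (Real.log B / 2) ≤ S := by
        have h := lower_L2A (γ := γ) (m := m) (ν := ν) hν0.le hm0.le hA0 hBm hB4 hBn
        rw [show (2:ℝ)^(-ν) * (4:ℝ)^(-(max γ 0) - 1) * (B^(γ+1) * A^(-ν)) * (Real.log B / 2)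
            = (2:ℝ)^(-ν) * cγ * (B^(γ+1) * A^(-ν)) * (Real.log B / 2) by rw [hcγdef],
          hBA] at h
        exact h
      rw [hApow, hlogA]
      have hkle1 : k ≤ k1/2 := le_trans (min_le_left _ _) (min_le_left _ _)
      have hkle2 : k ≤ k2/(4*m) := le_trans (min_le_left _ _) (min_le_right _ _)
      have e1 : k * B^((γ-m*ν)+1) ≤ S/2 := by
        calc k * B^((γ-m*ν)+1) ≤ (k1/2) * B^((γ-m*ν)+1) :=
              mul_le_mul_of_nonneg_right hkle1 hBp.le
          _ ≤ S/2 := by linarith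
      have e2 : k * (m * B^((γ-m*ν)+1) * Real.log B) ≤ S/2 := by
        have heq : k2/(4*m)*m = k2/4 := by field_simp
        have hkm : k * m ≤ k2/4 := by
          have h := mul_le_mul_of_nonneg_right hkle2 hm0.le
          linarith [heq]
        calc k * (m * B^((γ-m*ν)+1) * Real.log B)
            = (k*m) * (B^((γ-m*ν)+1) * Real.log B) := by ring
          _ ≤ (k2/4) * (B^((γ-m*ν)+1) * Real.log B) := by
              apply mul_le_mul_of_nonneg_right hkm
              positivity
          _ = (k2 * B^((γ-m*ν)+1) * (Real.log B/2))/2 := by ring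
          _ ≤ S/2 := by linarith
      calc k * (B^((γ-m*ν)+1) * (1 + m * Real.log B))
          = k * B^((γ-m*ν)+1) + k * (m * B^((γ-m*ν)+1) * Real.log B) := by ring
        _ ≤ S/2 + S/2 := add_le_add e1 e2
        _ = S := by ring
    · -- upper bound
      rw [hApow, hlogA]
      have hT0 : (0:ℝ) ≤ 1 + m * Real.log B := by
        have := mul_nonneg hm0.le hlogB
        linarith
      have hX0 : (0:ℝ) ≤ 1 + Real.log B := by linarith
      have hur := upper_reduction (γ:=γ) (m:=m) (ν:=ν) (n:=n) (A:=A) (B:=B) hν0.le hA0 hBm hB0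
      have hp1 := P1_caseA (γ:=γ) hγ (n:=n) (B:=B) hB4 hBn
      have hp2 := P2_caseA (β:=γ-m*ν) hβ (n:=n) (B:=B) hB4 hBn
      calc S ≤ A^(-ν) * ∑ i ∈ Icc 1 n, (i:ℝ)^γ * (∑ j ∈ Icc 1 (min n ⌊B/(i:ℝ)⌋₊), (j:ℝ)^γ)
            + ∑ i ∈ Icc 1 n, (i:ℝ)^(γ-m*ν) * (∑ j ∈ Icc (min n ⌊B/(i:ℝ)⌋₊ + 1) n, (j:ℝ)^(γ-m*ν)) := hur
        _ ≤ A^(-ν) * (Cγ * (B^(γ+1) * (1 + Real.log B)))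
            + ((Cβ + Cβ^2) * (B^((γ-m*ν)+1) * (1 + Real.log B))) := by
            apply add_le_add
            · exact mul_le_mul_of_nonneg_left hp1 hAν.le
            · exact hp2
        _ = (Cγ + (Cβ + Cβ^2)) * (B^((γ-m*ν)+1) * (1 + Real.log B)) := by
            rw [show A^(-ν) * (Cγ * (B^(γ+1) * (1 + Real.log B)))
              = Cγ * ((B^(γ+1) * A^(-ν)) * (1 + Real.log B)) by ring, hBA]
            ring
        _ ≤ K0 * (B^((γ-m*ν)+1) * (1 + Real.log B)) := by
            apply mul_le_mul_of_nonneg_right _ (by positivity)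
            rw [hK0def]
            linarith [sq_nonneg Cγ]
        _ ≤ K0 * (B^((γ-m*ν)+1) * (1 + m * Real.log B)) := by
            apply mul_le_mul_of_nonneg_left _ hK00.le
            apply mul_le_mul_of_nonneg_left _ hBp.le
            have h := mul_nonneg (by linarith : (0:ℝ) ≤ m - 1) hlogB
            have hexp : (m - 1) * Real.log B = m * Real.log B - Real.log B := by ring
            linarith [hexp ▸ h]
        _ ≤ max K0 k * (B^((γ-m*ν)+1) * (1 + m * Real.log B)) := by
            apply mul_le_mul_of_nonneg_right (le_max_left _ _)
            exact mul_nonneg hBp.le hT0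
  · -- case B > n
    have hnB : (n:ℝ) ≤ B := by
      by_contra h
      push_neg at h
      exact hcase (hiff.mpr h.le)
    rw [if_neg hcase]
    have hBp : (0:ℝ) < B^((γ-m*ν)+1) := Real.rpow_pos_of_pos hB0 _
    have hAν : (0:ℝ) < A^(-ν) := Real.rpow_pos_of_pos hA0 _
    have hD1 : (1:ℝ) ≤ (n:ℝ)^2/B := by rw [le_div_iff₀ hB0]; linarith
    have hD0 : (0:ℝ) < (n:ℝ)^2/B := by positivity
    have hlogD0 : (0:ℝ) ≤ Real.log ((n:ℝ)^2/B) := Real.log_nonneg hD1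
    have hn2m0 : (0:ℝ) < (n:ℝ)^(2*m) := Real.rpow_pos_of_pos hn0 _
    have hlogrel : Real.log ((n:ℝ)^(2*m)/A) = m * Real.log ((n:ℝ)^2/B) := by
      rw [Real.log_div (ne_of_gt hn2m0) (ne_of_gt hA0),
        Real.log_div (ne_of_gt hn2pos) (ne_of_gt hB0),
        Real.log_rpow hn0, ← hBm, Real.log_rpow hB0, hnsq_rpow, Real.log_rpow hn0]
      ring
    constructor
    · -- lower bound
      rw [hApow, hlogrel]
      by_cases hD : (n:ℝ)^2/B ≤ 16
      · have hkle : k ≤ k1/(1+m*Real.log 16) :=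
          le_trans (min_le_right _ _) (min_le_left _ _)
        have h16 : (0:ℝ) < 1 + m*Real.log 16 := by
          have := mul_nonneg hm0.le (by linarith : (0:ℝ) ≤ Real.log 16)
          linarith
        have hTle : 1 + m*Real.log ((n:ℝ)^2/B) ≤ 1 + m*Real.log 16 := by
          have h := mul_le_mul_of_nonneg_left (Real.log_le_log hD0 hD) hm0.le
          linarith
        have hT0 : (0:ℝ) ≤ 1 + m * Real.log ((n:ℝ)^2/B) := by
          have := mul_nonneg hm0.le hlogD0
          linarith
        calc k * (B^((γ-m*ν)+1) * (1 + m*Real.log ((n:ℝ)^2/B)))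
            ≤ k * (B^((γ-m*ν)+1) * (1 + m*Real.log 16)) := by
              apply mul_le_mul_of_nonneg_left _ hk0.le
              exact mul_le_mul_of_nonneg_left hTle hBp.le
          _ ≤ (k1/(1+m*Real.log 16)) * (B^((γ-m*ν)+1) * (1 + m*Real.log 16)) := by
              apply mul_le_mul_of_nonneg_right hkle
              positivity
          _ = k1 * B^((γ-m*ν)+1) := by field_simp
          _ ≤ S := hL1
      · push_neg at hD
        have hL2 : k2 * B^((γ-m*ν)+1) * Real.log ((n:ℝ)^2/B/4) ≤ S := by
          have h := lower_L2B (γ:=γ) (m:=m) (ν:=ν) hν0.le hm0.le hA0 hBm hB4 hnB hBn2 hn1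
          rw [show (2:ℝ)^(-ν) * (4:ℝ)^(-(max γ 0) - 1) * (B^(γ+1) * A^(-ν))
              = k2 * (B^(γ+1) * A^(-ν)) by rw [hk2def, hcγdef], hBA] at h
          exact h
        have hlog16D : Real.log 16 ≤ Real.log ((n:ℝ)^2/B) := Real.log_le_log (by norm_num) hD.le
        have hlogD1 : (1:ℝ) ≤ Real.log ((n:ℝ)^2/B) := le_trans hlog16 hlog16D
        have hlog164 : Real.log (16:ℝ) = 2 * Real.log 4 := by
          rw [show (16:ℝ) = 4^(2:ℕ) by norm_num, Real.log_pow]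
          push_cast
          ring
        have hlog4 : Real.log ((n:ℝ)^2/B) / 2 ≤ Real.log ((n:ℝ)^2/B/4) := by
          rw [Real.log_div (ne_of_gt hD0) (by norm_num)]
          linarith
        have hkle : k ≤ k2/(2*(1+m)) :=
          le_trans (min_le_right _ _) (min_le_right _ _)
        have hk1m : k * (1+m) ≤ k2/2 := by
          have heq : k2/(2*(1+m))*(1+m) = k2/2 := by
            field_simp
          have h := mul_le_mul_of_nonneg_right hkle (by linarith : (0:ℝ) ≤ 1+m)
          linarith [heq]
        calc k * (B^((γ-m*ν)+1) * (1 + m*Real.log ((n:ℝ)^2/B)))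
            ≤ k * (B^((γ-m*ν)+1) * ((1+m)*Real.log ((n:ℝ)^2/B))) := by
              apply mul_le_mul_of_nonneg_left _ hk0.le
              apply mul_le_mul_of_nonneg_left _ hBp.le
              rw [add_mul, one_mul]
              have := mul_le_mul_of_nonneg_left hlogD1 hm0.le
              linarith
          _ = (k*(1+m)) * (B^((γ-m*ν)+1) * Real.log ((n:ℝ)^2/B)) := by ring
          _ ≤ (k2/2) * (B^((γ-m*ν)+1) * Real.log ((n:ℝ)^2/B)) := by
              apply mul_le_mul_of_nonneg_right hk1m
              positivity
          _ = k2 * B^((γ-m*ν)+1) * (Real.log ((n:ℝ)^2/B)/2) := by ring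
          _ ≤ k2 * B^((γ-m*ν)+1) * Real.log ((n:ℝ)^2/B/4) := by
              apply mul_le_mul_of_nonneg_left hlog4
              positivity
          _ ≤ S := hL2
    · -- upper bound
      rw [hApow, hlogrel]
      have hT0 : (0:ℝ) ≤ 1 + m * Real.log ((n:ℝ)^2/B) := by
        have := mul_nonneg hm0.le hlogD0
        linarith
      have hX0 : (0:ℝ) ≤ 1 + Real.log ((n:ℝ)^2/B) := by linarith
      have hur := upper_reduction (γ:=γ) (m:=m) (ν:=ν) (n:=n) (A:=A) (B:=B) hν0.le hA0 hBm hB0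
      have hp1 := P1_caseB (γ:=γ) hγ (n:=n) (B:=B) hB4 hnB hBn2 hn1
      have hp2 := P2_caseB (β:=γ-m*ν) hβ (n:=n) (B:=B) hB4 hnB hBn2 hn1
      calc S ≤ A^(-ν) * ∑ i ∈ Icc 1 n, (i:ℝ)^γ * (∑ j ∈ Icc 1 (min n ⌊B/(i:ℝ)⌋₊), (j:ℝ)^γ)
            + ∑ i ∈ Icc 1 n, (i:ℝ)^(γ-m*ν) * (∑ j ∈ Icc (min n ⌊B/(i:ℝ)⌋₊ + 1) n, (j:ℝ)^(γ-m*ν)) := hur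
        _ ≤ A^(-ν) * ((Cγ + Cγ^2) * (B^(γ+1) * (1 + Real.log ((n:ℝ)^2/B))))
            + (Cβ * (B^((γ-m*ν)+1) * (1 + Real.log ((n:ℝ)^2/B)))) := by
            apply add_le_add
            · exact mul_le_mul_of_nonneg_left hp1 hAν.le
            · exact hp2
        _ = ((Cγ + Cγ^2) + Cβ) * (B^((γ-m*ν)+1) * (1 + Real.log ((n:ℝ)^2/B))) := by
            rw [show A^(-ν) * ((Cγ + Cγ^2) * (B^(γ+1) * (1 + Real.log ((n:ℝ)^2/B))))
              = (Cγ + Cγ^2) * ((B^(γ+1) * A^(-ν)) * (1 + Real.log ((n:ℝ)^2/B))) by ring, hBA]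
            ring
        _ ≤ K0 * (B^((γ-m*ν)+1) * (1 + Real.log ((n:ℝ)^2/B))) := by
            apply mul_le_mul_of_nonneg_right _ (by positivity)
            rw [hK0def]
            linarith [sq_nonneg Cβ]
        _ ≤ K0 * (B^((γ-m*ν)+1) * (1 + m * Real.log ((n:ℝ)^2/B))) := by
            apply mul_le_mul_of_nonneg_left _ hK00.le
            apply mul_le_mul_of_nonneg_left _ hBp.le
            have h := mul_nonneg (by linarith : (0:ℝ) ≤ m - 1) hlogD0
            have hexp : (m - 1) * Real.log ((n:ℝ)^2/B) = m * Real.log ((n:ℝ)^2/B) - Real.log ((n:ℝ)^2/B) := by ring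
            linarith [hexp ▸ h]
        _ ≤ max K0 k * (B^((γ-m*ν)+1) * (1 + m * Real.log ((n:ℝ)^2/B))) := by
            apply mul_le_mul_of_nonneg_right (le_max_left _ _)
            exact mul_nonneg hBp.le hT0
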